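/- arXiv:2103.04886 — 3 statements merged into one kernel-verified Lean document; each statement's English description precedes it below -/
import Mathlib

section
/- Let Att : ℝ^{d×n} → ℝ^{d×m} be a Lipschitz continuous map (with respect to the Frobenius norm on both domain and codomain) with Lipschitz constant L_F(Att). Fix matrices W_1, …, W_h (each mapping ℝ^{d_I×n} inputs to ℝ^{d×n}, i.e. W_k ∈ ℝ^{d×d_I}) and W_O ∈ ℝ^{d_O×dh}, and define the multi-head attention MultAtt : ℝ^{d_I×n} → ℝ^{d_O×m} by MultAtt(X) = W_O · (Att(W_1 X) ‖ Att(W_2 X) ‖ … ‖ Att(W_h X)), where ‖ denotes row-wise (vertical) concatenation of the h output matrices into a (dh)×m matrix. Then MultAtt is Lipschitz continuous with respect to the Frobenius norm and L_F(MultAtt) ≤ L_F(Att) · ‖W_O‖_* · √(Σ_{k=1}^h ‖W_k‖_*²), i.e. for all X, Y ∈ ℝ^{d_I×n}, ‖MultAtt(X) − MultAtt(Y)‖_F ≤ L_F(Att) · ‖W_O‖_* · √(Σ_{k=1}^h ‖W_k‖_*²) · ‖X − Y‖_F. -/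
open scoped BigOperators

/-- Frobenius norm of a real matrix. -/
noncomputable def frobNorm {α β : Type*} [Fintype α] [Fintype β] (M : Matrix α β ℝ) : ℝ :=
  Real.sqrt (∑ i, ∑ j, (M i j) ^ 2)

/-- Row-wise softmax of a real matrix. -/
noncomputable def softmaxM {α β : Type*} [Fintype α] [Fintype β] (M : Matrix α β ℝ) :
    Matrix α β ℝ :=
  Matrix.of fun i j => Real.exp (M i j) / ∑ k, Real.exp (M i k)

/-- The `(∞,2)`-norm of a matrix: the maximum Euclidean norm of its rows. -/
noncomputable def normInf2 {α β : Type*} [Fintype α] [Fintype β] (M : Matrix α β ℝ) : ℝ :=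
  ⨆ i, Real.sqrt (∑ j, (M i j) ^ 2)

/-- The `(2,∞)`-norm of a matrix: the ℓ2 norm of the vector of row-wise maxima (in abs. value). -/
noncomputable def norm2Inf {α β : Type*} [Fintype α] [Fintype β] (M : Matrix α β ℝ) : ℝ :=
  Real.sqrt (∑ i, (⨆ j, |M i j|) ^ 2)

/-- Spectral norm (largest singular value / ℓ2→ℓ2 operator norm) of a real matrix. -/
noncomputable def specNorm {α β : Type*} [Fintype α] [Fintype β] [DecidableEq β]
    (M : Matrix α β ℝ) : ℝ :=
  ‖LinearMap.toContinuousLinearMap (Matrix.toEuclideanLin M)‖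

lemma frobNorm_nonneg {α β : Type*} [Fintype α] [Fintype β] (M : Matrix α β ℝ) :
    0 ≤ frobNorm M := Real.sqrt_nonneg _

lemma specNorm_nonneg {α β : Type*} [Fintype α] [Fintype β] [DecidableEq β]
    (M : Matrix α β ℝ) : 0 ≤ specNorm M := norm_nonneg _

lemma mulVec_bound {α β : Type*} [Fintype α] [Fintype β] [DecidableEq β]
    (M : Matrix α β ℝ) (v : β → ℝ) :
    Real.sqrt (∑ i, (M.mulVec v i) ^ 2) ≤ specNorm M * Real.sqrt (∑ j, (v j) ^ 2) := by
  have key := (LinearMap.toContinuousLinearMap (Matrix.toEuclideanLin M)).le_opNorm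
    ((WithLp.equiv 2 (β → ℝ)).symm v)
  simpa [EuclideanSpace.norm_eq, specNorm, Matrix.toEuclideanLin_apply,
    sq_abs] using key

lemma frob_mul_le {α β γ : Type*} [Fintype α] [Fintype β] [Fintype γ] [DecidableEq β]
    (M : Matrix α β ℝ) (N : Matrix β γ ℝ) :
    frobNorm (M * N) ≤ specNorm M * frobNorm N := by
  have hcol : ∀ j, ∑ i, ((M * N) i j) ^ 2 ≤ specNorm M ^ 2 * ∑ k, (N k j) ^ 2 := by
    intro j
    have hb := mulVec_bound M (fun k => N k j)
    have h1 : ∑ i, (M.mulVec (fun k => N k j) i) ^ 2 ≤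
        (specNorm M * Real.sqrt (∑ k, (N k j) ^ 2)) ^ 2 := by
      have hnn : 0 ≤ ∑ i, (M.mulVec (fun k => N k j) i) ^ 2 :=
        Finset.sum_nonneg fun _ _ => sq_nonneg _
      calc ∑ i, (M.mulVec (fun k => N k j) i) ^ 2
          = Real.sqrt (∑ i, (M.mulVec (fun k => N k j) i) ^ 2) ^ 2 := (Real.sq_sqrt hnn).symm
        _ ≤ _ := by
            apply pow_le_pow_left₀ (Real.sqrt_nonneg _) hb
    have h2 : (specNorm M * Real.sqrt (∑ k, (N k j) ^ 2)) ^ 2 =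
        specNorm M ^ 2 * ∑ k, (N k j) ^ 2 := by
      rw [mul_pow, Real.sq_sqrt (Finset.sum_nonneg fun _ _ => sq_nonneg _)]
    have hmv : ∀ i, (M * N) i j = M.mulVec (fun k => N k j) i := by
      intro i; simp [Matrix.mul_apply, Matrix.mulVec, dotProduct]
    calc ∑ i, ((M * N) i j) ^ 2 = ∑ i, (M.mulVec (fun k => N k j) i) ^ 2 := by
          simp_rw [hmv]
      _ ≤ _ := h1.trans_eq h2
  have hsum : ∑ i, ∑ j, ((M * N) i j) ^ 2 ≤ specNorm M ^ 2 * ∑ k, ∑ j, (N k j) ^ 2 := by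
    rw [Finset.sum_comm]
    calc ∑ j, ∑ i, ((M * N) i j) ^ 2 ≤ ∑ j, specNorm M ^ 2 * ∑ k, (N k j) ^ 2 :=
          Finset.sum_le_sum fun j _ => hcol j
      _ = specNorm M ^ 2 * ∑ j, ∑ k, (N k j) ^ 2 := by rw [Finset.mul_sum]
      _ = _ := by rw [Finset.sum_comm]
  unfold frobNorm
  calc Real.sqrt (∑ i, ∑ j, ((M * N) i j) ^ 2)
      ≤ Real.sqrt (specNorm M ^ 2 * ∑ k, ∑ j, (N k j) ^ 2) := Real.sqrt_le_sqrt hsum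
    _ = specNorm M * Real.sqrt (∑ k, ∑ j, (N k j) ^ 2) := by
        rw [Real.sqrt_mul (sq_nonneg _), Real.sqrt_sq (specNorm_nonneg M)]

/-- If each attention head `Att` is Lipschitz continuous with constant `L`
(for the Frobenius norm), then multi-head attention
`MultAtt X = W_O ⬝ (Att (W₁ X) ‖ ⋯ ‖ Att (W_h X))` is Lipschitz continuous with constant
`L ⬝ ‖W_O‖_* ⬝ √(∑ₖ ‖Wₖ‖_*²)`.  The row-wise concatenation of the `h` heads (each `d × m`)
into a `(h⬝d) × m` matrix is realized by indexing rows by `Fin h × Fin d`. -/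
theorem multihead_attention_lipschitz
    {dI d dO n m h : ℕ}
    (Att : Matrix (Fin d) (Fin n) ℝ → Matrix (Fin d) (Fin m) ℝ)
    (L : ℝ)
    (hAtt : ∀ X Y, frobNorm (Att X - Att Y) ≤ L * frobNorm (X - Y))
    (W : Fin h → Matrix (Fin d) (Fin dI) ℝ)
    (WO : Matrix (Fin dO) (Fin h × Fin d) ℝ)
    (MultAtt : Matrix (Fin dI) (Fin n) ℝ → Matrix (Fin dO) (Fin m) ℝ)
    (hMult : ∀ X, MultAtt X =
      WO * Matrix.of (fun (ki : Fin h × Fin d) (j : Fin m) => Att (W ki.1 * X) ki.2 j)) :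
    ∀ X Y : Matrix (Fin dI) (Fin n) ℝ,
      frobNorm (MultAtt X - MultAtt Y) ≤
        L * specNorm WO * Real.sqrt (∑ k, specNorm (W k) ^ 2) * frobNorm (X - Y) := by
  intro X Y
  by_cases hXY : X = Y
  · subst hXY
    simp [frobNorm]
  by_cases hd : d = 0
  · subst hd
    have hWk : ∀ k, W k = 0 := fun k => by ext i; exact i.elim0
    have hW0 : ∀ k, specNorm (W k) = 0 := by
      intro k; rw [hWk k]; simp [specNorm]
    have hMeq : MultAtt X = MultAtt Y := by
      rw [hMult, hMult]
      congr 1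
      ext ki j
      exact ki.2.elim0
    rw [hMeq]
    simp [frobNorm, hW0]
  -- main case : d > 0, and n > 0 (since X ≠ Y)
  have hn : 0 < n := by
    by_contra hn
    exact hXY (by ext i j; exact absurd j.isLt (by omega))
  have hdpos : 0 < d := Nat.pos_of_ne_zero hd
  -- L is nonnegative
  have hL : 0 ≤ L := by
    set E : Matrix (Fin d) (Fin n) ℝ := Matrix.of fun _ _ => (1 : ℝ) with hE
    have h1 := (frobNorm_nonneg (Att E - Att 0)).trans (hAtt E 0)
    have h2 : frobNorm (E - 0) = Real.sqrt (d * n) := by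
      simp [frobNorm, hE, Finset.sum_const]
    rw [h2] at h1
    have h3 : 0 < Real.sqrt (d * n) := Real.sqrt_pos.mpr (by positivity)
    nlinarith
  set t := frobNorm (X - Y) with ht
  have ht0 : 0 ≤ t := frobNorm_nonneg _
  set CX := Matrix.of (fun (ki : Fin h × Fin d) (j : Fin m) => Att (W ki.1 * X) ki.2 j) with hCX
  set CY := Matrix.of (fun (ki : Fin h × Fin d) (j : Fin m) => Att (W ki.1 * Y) ki.2 j) with hCY
  have hdiff : MultAtt X - MultAtt Y = WO * (CX - CY) := by
    rw [hMult, hMult, Matrix.mul_sub]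
  set a : Fin h → ℝ := fun k => frobNorm (Att (W k * X) - Att (W k * Y)) with ha
  have ha0 : ∀ k, 0 ≤ a k := fun k => frobNorm_nonneg _
  have hak : ∀ k, a k ≤ L * (specNorm (W k) * t) := by
    intro k
    calc a k ≤ L * frobNorm (W k * X - W k * Y) := hAtt _ _
      _ = L * frobNorm (W k * (X - Y)) := by rw [Matrix.mul_sub]
      _ ≤ L * (specNorm (W k) * t) :=
          mul_le_mul_of_nonneg_left (frob_mul_le (W k) (X - Y)) hL
  have hCfrob : frobNorm (CX - CY) = Real.sqrt (∑ k, (a k) ^ 2) := by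
    unfold frobNorm
    congr 1
    rw [Fintype.sum_prod_type]
    apply Finset.sum_congr rfl
    intro k _
    have : ∀ i : Fin d, ∑ j, ((CX - CY) (k, i) j) ^ 2 =
        ∑ j, ((Att (W k * X) - Att (W k * Y)) i j) ^ 2 := by
      intro i
      apply Finset.sum_congr rfl
      intro j _
      simp [hCX, hCY, Matrix.sub_apply]
    rw [Finset.sum_congr rfl (fun i _ => this i)]
    rw [ha]
    simp only [frobNorm]
    exact (Real.sq_sqrt (Finset.sum_nonneg fun _ _ =>
      Finset.sum_nonneg fun _ _ => sq_nonneg _)).symm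
  have hsq : ∑ k, (a k) ^ 2 ≤ (L * t) ^ 2 * ∑ k, specNorm (W k) ^ 2 := by
    calc ∑ k, (a k) ^ 2 ≤ ∑ k, (L * (specNorm (W k) * t)) ^ 2 :=
          Finset.sum_le_sum fun k _ => pow_le_pow_left₀ (ha0 k) (hak k) 2
      _ = (L * t) ^ 2 * ∑ k, specNorm (W k) ^ 2 := by
          rw [Finset.mul_sum]; apply Finset.sum_congr rfl; intro k _; ring
  have hCle : frobNorm (CX - CY) ≤ L * t * Real.sqrt (∑ k, specNorm (W k) ^ 2) := by
    rw [hCfrob]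
    calc Real.sqrt (∑ k, (a k) ^ 2)
        ≤ Real.sqrt ((L * t) ^ 2 * ∑ k, specNorm (W k) ^ 2) := Real.sqrt_le_sqrt hsq
      _ = L * t * Real.sqrt (∑ k, specNorm (W k) ^ 2) := by
          rw [Real.sqrt_mul (sq_nonneg _), Real.sqrt_sq (by positivity)]
  calc frobNorm (MultAtt X - MultAtt Y) = frobNorm (WO * (CX - CY)) := by rw [hdiff]
    _ ≤ specNorm WO * frobNorm (CX - CY) := frob_mul_le _ _
    _ ≤ specNorm WO * (L * t * Real.sqrt (∑ k, specNorm (W k) ^ 2)) :=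
        mul_le_mul_of_nonneg_left hCle (specNorm_nonneg _)
    _ = L * specNorm WO * Real.sqrt (∑ k, specNorm (W k) ^ 2) * t := by ring
end

section
/- Let g : ℝ^{d×n} → ℝ^{m×n} be differentiable at X ∈ ℝ^{d×n}, and let Att(X) = X · softmax(g(X))ᵀ ∈ ℝ^{d×m}. Suppose C ≥ 0 is such that for every H ∈ ℝ^{d×n}, ‖Dg_X(H)‖_{(2,∞)} ≤ C · ‖H‖_F, where Dg_X denotes the Fréchet derivative of g at X. Then Att is differentiable at X and for every H ∈ ℝ^{d×n}, ‖DAtt_X(H)‖_F ≤ (‖softmax(g(X))‖_F + √2 · ‖Xᵀ‖_{(∞,2)} · C) · ‖H‖_F. -/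
set_option maxHeartbeats 1000000
open scoped BigOperators Matrix

attribute [local instance]
  Matrix.frobeniusSeminormedAddCommGroup Matrix.frobeniusNormedAddCommGroup
  Matrix.frobeniusNormedSpace

noncomputable def matPiEquiv (m n : ℕ) :
    Matrix (Fin m) (Fin n) ℝ ≃L[ℝ] (Fin m → Fin n → ℝ) :=
  LinearEquiv.toContinuousLinearEquiv
    (LinearEquiv.refl ℝ (Matrix (Fin m) (Fin n) ℝ) :
      Matrix (Fin m) (Fin n) ℝ ≃ₗ[ℝ] (Fin m → Fin n → ℝ))

noncomputable def entryCLM (m n : ℕ) (i : Fin m) (j : Fin n) :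
    Matrix (Fin m) (Fin n) ℝ →L[ℝ] ℝ :=
  LinearMap.toContinuousLinearMap
    { toFun := fun M => M i j
      map_add' := fun _ _ => rfl
      map_smul' := fun _ _ => rfl }

noncomputable def smDeriv (m n : ℕ) (A : Matrix (Fin m) (Fin n) ℝ) :
    Matrix (Fin m) (Fin n) ℝ →L[ℝ] Matrix (Fin m) (Fin n) ℝ :=
  LinearMap.toContinuousLinearMap
    { toFun := fun E => Matrix.of fun i j =>
        softmaxM A i j * (E i j - ∑ k, softmaxM A i k * E i k)
      map_add' := fun E F => by
        ext i j
        simp only [Matrix.add_apply, Matrix.of_apply, mul_add, Finset.sum_add_distrib]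
        ring
      map_smul' := fun c E => by
        ext i j
        simp only [Matrix.smul_apply, smul_eq_mul, Matrix.of_apply]
        have : (∑ k, softmaxM A i k * (c * E i k)) = c * ∑ k, softmaxM A i k * E i k := by
          rw [Finset.mul_sum]; exact Finset.sum_congr rfl fun k _ => by ring
        rw [this]; simp only [RingHom.id_apply]; ring }

theorem smDeriv_apply (m n : ℕ) (A E : Matrix (Fin m) (Fin n) ℝ) (i j) :
    smDeriv m n A E i j = softmaxM A i j * (E i j - ∑ k, softmaxM A i k * E i k) := by
  simp only [smDeriv, LinearMap.coe_toContinuousLinearMap', LinearMap.coe_mk, AddHom.coe_mk,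
    Matrix.of_apply]

theorem hasFDerivAt_softmaxM (m n : ℕ) (A : Matrix (Fin m) (Fin n) ℝ) :
    HasFDerivAt softmaxM (smDeriv m n A) A := by
  refine (matPiEquiv m n).comp_hasFDerivAt_iff.mp (?_ : HasFDerivAt ((matPiEquiv m n) ∘ softmaxM)
    (((matPiEquiv m n) : Matrix (Fin m) (Fin n) ℝ →L[ℝ] (Fin m → Fin n → ℝ)).comp (smDeriv m n A)) A)
  apply hasFDerivAt_pi''
  intro i
  apply hasFDerivAt_pi''
  intro j
  have hpos : 0 < ∑ k, Real.exp (A i k) :=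
    Finset.sum_pos (fun k _ => Real.exp_pos _) ⟨j, Finset.mem_univ j⟩
  have h1 : HasFDerivAt (fun M : Matrix (Fin m) (Fin n) ℝ => Real.exp (M i j))
      (Real.exp (A i j) • entryCLM m n i j) A :=
    (entryCLM m n i j).hasFDerivAt.exp
  have h2 : HasFDerivAt (fun M : Matrix (Fin m) (Fin n) ℝ => ∑ k, Real.exp (M i k))
      (∑ k, Real.exp (A i k) • entryCLM m n i k) A :=
    HasFDerivAt.fun_sum fun k _ => (entryCLM m n i k).hasFDerivAt.exp
  have hcoe : ∀ (G : Matrix (Fin m) (Fin n) ℝ) (a : Fin m) (b : Fin n),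
      matPiEquiv m n G a b = G a b := by
    intro G a b
    simp only [matPiEquiv, LinearEquiv.coe_toContinuousLinearEquiv, LinearEquiv.refl_apply]
    rfl
  have hinv : HasFDerivAt (fun M : Matrix (Fin m) (Fin n) ℝ => (∑ k, Real.exp (M i k))⁻¹)
      ((-((∑ k, Real.exp (A i k)) ^ 2)⁻¹) • (∑ k, Real.exp (A i k) • entryCLM m n i k)) A :=
    (hasDerivAt_inv hpos.ne').comp_hasFDerivAt A h2
  have hmul := h1.mul hinv
  simp only [Function.comp_def, hcoe, softmaxM, Matrix.of_apply, div_eq_mul_inv]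
  refine hmul.congr_fderiv ?_
  ext E
  change (Real.exp (A i j) • -((∑ k, Real.exp (A i k)) ^ 2)⁻¹ • ∑ k, Real.exp (A i k) • entryCLM m n i k +
    (∑ k, Real.exp (A i k))⁻¹ • Real.exp (A i j) • entryCLM m n i j : Matrix (Fin m) (Fin n) ℝ →L[ℝ] ℝ) E
    = smDeriv m n A E i j
  simp only [ContinuousLinearMap.smul_apply, ContinuousLinearMap.add_apply,
    ContinuousLinearMap.neg_apply, ContinuousLinearMap.coe_comp', Function.comp_apply,
    ContinuousLinearMap.proj_apply, ContinuousLinearMap.coe_sum', Finset.sum_apply,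
    smul_eq_mul, ContinuousLinearEquiv.coe_coe]
  have hE : ∀ (a : Fin m) (b : Fin n), entryCLM m n a b E = E a b := fun a b => by
    simp only [entryCLM, LinearMap.coe_toContinuousLinearMap', LinearMap.coe_mk, AddHom.coe_mk]
    rfl
  simp only [hE, hcoe, smDeriv_apply, softmaxM, Matrix.of_apply]
  set S := ∑ k, Real.exp (A i k) with hS
  have h1 : (∑ k, Real.exp (A i k) * E i k) / S = ∑ k, Real.exp (A i k) / S * E i k := by
    rw [Finset.sum_div]
    exact Finset.sum_congr rfl fun k _ => by ring
  rw [← h1]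
  field_simp
  ring
-- ===== auxiliary lemmas for the bound =====

theorem frobNorm_eq_norm {a b : ℕ} (M : Matrix (Fin a) (Fin b) ℝ) : frobNorm M = ‖M‖ := by
  rw [frobNorm, Matrix.frobenius_norm_def, Real.sqrt_eq_rpow]
  congr 1
  refine Finset.sum_congr rfl fun i _ => Finset.sum_congr rfl fun j _ => ?_
  rw [Real.norm_eq_abs, Real.rpow_two, sq_abs]

theorem frobNorm_nonneg_s1 {a b : ℕ} (M : Matrix (Fin a) (Fin b) ℝ) : 0 ≤ frobNorm M :=
  Real.sqrt_nonneg _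

/-- the bounded bilinear product map -/
noncomputable def mulCLM (d n m : ℕ) :
    Matrix (Fin d) (Fin n) ℝ →L[ℝ] Matrix (Fin n) (Fin m) ℝ →L[ℝ] Matrix (Fin d) (Fin m) ℝ :=
  LinearMap.mkContinuous₂
    (LinearMap.mk₂ ℝ (fun A B => A * B)
      (fun A A' B => Matrix.add_mul A A' B)
      (fun c A B => Matrix.smul_mul c A B)
      (fun A B B' => Matrix.mul_add A B B')
      (fun c A B => Matrix.mul_smul A c B)) 1
    (fun A B => by simpa using Matrix.frobenius_norm_mul A B)

theorem mulCLM_apply (d n m : ℕ) (A : Matrix (Fin d) (Fin n) ℝ) (B : Matrix (Fin n) (Fin m) ℝ) :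
    mulCLM d n m A B = A * B := by
  simp only [mulCLM, LinearMap.mkContinuous₂_apply, LinearMap.mk₂_apply]
  rfl

/-- transpose as a continuous linear map -/
noncomputable def transCLM (m n : ℕ) :
    Matrix (Fin m) (Fin n) ℝ →L[ℝ] Matrix (Fin n) (Fin m) ℝ :=
  LinearMap.toContinuousLinearMap
    { toFun := fun M => Mᵀ
      map_add' := fun _ _ => rfl
      map_smul' := fun _ _ => rfl }

theorem transCLM_apply (m n : ℕ) (M : Matrix (Fin m) (Fin n) ℝ) : transCLM m n M = Mᵀ := by
  simp only [transCLM, LinearMap.coe_toContinuousLinearMap', LinearMap.coe_mk, AddHom.coe_mk]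
  rfl

theorem softmax_nonneg {a b : ℕ} (A : Matrix (Fin a) (Fin b) ℝ) (i j) :
    0 ≤ softmaxM A i j :=
  div_nonneg (Real.exp_pos _).le (Finset.sum_nonneg fun k _ => (Real.exp_pos _).le)

theorem softmax_row_sum_le {a b : ℕ} (A : Matrix (Fin a) (Fin b) ℝ) (i : Fin a) :
    ∑ j, softmaxM A i j ≤ 1 := by
  rcases isEmpty_or_nonempty (Fin b) with h | h
  · simp
  · have hpos : 0 < ∑ k, Real.exp (A i k) :=
      Finset.sum_pos (fun k _ => Real.exp_pos _) Finset.univ_nonempty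
    have : ∑ j, softmaxM A i j = 1 := by
      simp only [softmaxM, Matrix.of_apply]
      rw [← Finset.sum_div, div_self hpos.ne']
    exact this.le

/-- weighted Cauchy-Schwarz bound on the ℓ1 norm of a softmax-derivative row -/
theorem row_l1_bound {b : ℕ} (s x : Fin b → ℝ) (M : ℝ) (hs : ∀ j, 0 ≤ s j)
    (hsum : ∑ j, s j ≤ 1) (hx : ∀ j, |x j| ≤ M) (hM : 0 ≤ M) :
    ∑ j, s j * |x j - ∑ k, s k * x k| ≤ M := by
  set μ := ∑ k, s k * x k with hμ
  set t := ∑ j, s j with ht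
  have ht0 : 0 ≤ t := Finset.sum_nonneg fun j _ => hs j
  have cs : (∑ j, s j * |x j - μ|) ^ 2 ≤ t * ∑ j, s j * (x j - μ) ^ 2 := by
    have h := Finset.sum_mul_sq_le_sq_mul_sq Finset.univ
      (fun j => Real.sqrt (s j)) (fun j => Real.sqrt (s j) * |x j - μ|)
    have e1 : ∀ j : Fin b, Real.sqrt (s j) * (Real.sqrt (s j) * |x j - μ|)
        = s j * |x j - μ| := fun j => by
      rw [← mul_assoc, Real.mul_self_sqrt (hs j)]
    have e2 : ∀ j : Fin b, Real.sqrt (s j) ^ 2 = s j := fun j => Real.sq_sqrt (hs j)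
    have e3 : ∀ j : Fin b, (Real.sqrt (s j) * |x j - μ|) ^ 2 = s j * (x j - μ) ^ 2 := fun j => by
      rw [mul_pow, Real.sq_sqrt (hs j), sq_abs]
    calc (∑ j, s j * |x j - μ|) ^ 2
        = (∑ j, Real.sqrt (s j) * (Real.sqrt (s j) * |x j - μ|)) ^ 2 := by
          rw [Finset.sum_congr rfl fun j _ => (e1 j).symm]
      _ ≤ (∑ j, Real.sqrt (s j) ^ 2) * ∑ j, (Real.sqrt (s j) * |x j - μ|) ^ 2 := h
      _ = t * ∑ j, s j * (x j - μ) ^ 2 := by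
          rw [Finset.sum_congr rfl fun j _ => e2 j, Finset.sum_congr rfl fun j _ => e3 j]
  have expand : ∑ j, s j * (x j - μ) ^ 2
      = (∑ j, s j * x j ^ 2) - 2 * μ ^ 2 + μ ^ 2 * t := by
    have : ∀ j : Fin b, s j * (x j - μ) ^ 2
        = s j * x j ^ 2 - 2 * μ * (s j * x j) + μ ^ 2 * s j := fun j => by ring
    rw [Finset.sum_congr rfl fun j _ => this j]
    rw [Finset.sum_add_distrib, Finset.sum_sub_distrib, ← Finset.mul_sum, ← Finset.mul_sum]
    rw [← hμ, ← ht]; ring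
  have hvar : ∑ j, s j * (x j - μ) ^ 2 ≤ ∑ j, s j * x j ^ 2 := by
    rw [expand]; nlinarith [sq_nonneg μ]
  have hsx : ∑ j, s j * x j ^ 2 ≤ M ^ 2 := by
    calc ∑ j, s j * x j ^ 2 ≤ ∑ j, s j * M ^ 2 := by
          refine Finset.sum_le_sum fun j _ => mul_le_mul_of_nonneg_left ?_ (hs j)
          calc x j ^ 2 = |x j| ^ 2 := (sq_abs _).symm
            _ ≤ M ^ 2 := by nlinarith [hx j, abs_nonneg (x j)]
      _ = t * M ^ 2 := by rw [← Finset.sum_mul]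
      _ ≤ M ^ 2 := by nlinarith [sq_nonneg M]
  have hsq : (∑ j, s j * |x j - μ|) ^ 2 ≤ M ^ 2 := by
    calc (∑ j, s j * |x j - μ|) ^ 2 ≤ t * ∑ j, s j * (x j - μ) ^ 2 := cs
      _ ≤ 1 * (∑ j, s j * x j ^ 2) := by
          refine mul_le_mul hsum hvar ?_ zero_le_one
          exact Finset.sum_nonneg fun j _ => mul_nonneg (hs j) (sq_nonneg _)
      _ = ∑ j, s j * x j ^ 2 := one_mul _
      _ ≤ M ^ 2 := hsx
  have hL : 0 ≤ ∑ j, s j * |x j - μ| :=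
    Finset.sum_nonneg fun j _ => mul_nonneg (hs j) (abs_nonneg _)
  nlinarith [hsq, hL, hM]

/-- triangle inequality for a linear combination of columns, via EuclideanSpace -/
theorem sqrt_sum_sq_lin_comb {a b : ℕ} (c : Fin b → ℝ) (u : Fin a → Fin b → ℝ) :
    Real.sqrt (∑ i, (∑ j, c j * u i j) ^ 2) ≤ ∑ j, |c j| * Real.sqrt (∑ i, (u i j) ^ 2) := by
  let v : Fin b → EuclideanSpace ℝ (Fin a) := fun j => WithLp.toLp 2 (fun i => u i j)
  have hnorm : ∀ j, ‖v j‖ = Real.sqrt (∑ i, (u i j) ^ 2) := fun j => by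
    rw [EuclideanSpace.norm_eq]
    congr 1
    exact Finset.sum_congr rfl fun i _ => by rw [Real.norm_eq_abs, sq_abs]
  have hsumv : ∀ i : Fin a, (∑ j, c j • v j) i = ∑ j, c j * u i j := fun i => by
    have h1 : (∑ j, c j • v j) i = ∑ j, (c j • v j) i :=
      by rw [WithLp.ofLp_sum]; exact Finset.sum_apply i Finset.univ fun j => (c j • v j).ofLp
    rw [h1]
    exact Finset.sum_congr rfl fun j _ => by simp [v]
  have hnorm2 : ‖∑ j, c j • v j‖ = Real.sqrt (∑ i, (∑ j, c j * u i j) ^ 2) := by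
    rw [EuclideanSpace.norm_eq]
    congr 1
    exact Finset.sum_congr rfl fun i _ => by rw [Real.norm_eq_abs, sq_abs, hsumv]
  calc Real.sqrt (∑ i, (∑ j, c j * u i j) ^ 2) = ‖∑ j, c j • v j‖ := hnorm2.symm
    _ ≤ ∑ j, ‖c j • v j‖ := norm_sum_le _ _
    _ = ∑ j, |c j| * Real.sqrt (∑ i, (u i j) ^ 2) := by
        refine Finset.sum_congr rfl fun j _ => ?_
        rw [norm_smul, Real.norm_eq_abs, hnorm]

theorem normInf2_nonneg {a b : ℕ} (M : Matrix (Fin a) (Fin b) ℝ) : 0 ≤ normInf2 M :=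
  Real.iSup_nonneg fun _ => Real.sqrt_nonneg _

/-- bound on `‖X * Dᵀ‖_F` in terms of row ℓ1 norms of `D` -/
theorem frob_mul_transpose_bound {d n m : ℕ} (X : Matrix (Fin d) (Fin n) ℝ)
    (D : Matrix (Fin m) (Fin n) ℝ) (r : Fin m → ℝ) (hr : ∀ i, 0 ≤ r i)
    (hD : ∀ i, ∑ j, |D i j| ≤ r i) :
    frobNorm (X * Dᵀ) ≤ normInf2 Xᵀ * Real.sqrt (∑ i, (r i) ^ 2) := by
  set K := normInf2 Xᵀ with hK
  have hK0 : 0 ≤ K := normInf2_nonneg _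
  have hcol : ∀ j : Fin n, Real.sqrt (∑ a, (X a j) ^ 2) ≤ K := by
    intro j
    have he : Real.sqrt (∑ a, (X a j) ^ 2) = Real.sqrt (∑ a, (Xᵀ j a) ^ 2) := rfl
    rw [he, hK]
    simp only [normInf2]
    exact le_ciSup (f := fun i : Fin n => Real.sqrt (∑ a, (Xᵀ i a) ^ 2))
      (Set.Finite.bddAbove (Set.finite_range _)) j
  have hrow : ∀ i : Fin m, Real.sqrt (∑ a, (∑ j, X a j * D i j) ^ 2) ≤ r i * K := by
    intro i
    calc Real.sqrt (∑ a, (∑ j, X a j * D i j) ^ 2)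
        = Real.sqrt (∑ a, (∑ j, D i j * X a j) ^ 2) := by
          congr 1
          exact Finset.sum_congr rfl fun a _ => by
            rw [Finset.sum_congr rfl fun j _ => mul_comm (X a j) (D i j)]
      _ ≤ ∑ j, |D i j| * Real.sqrt (∑ a, (X a j) ^ 2) := sqrt_sum_sq_lin_comb _ _
      _ ≤ ∑ j, |D i j| * K := by
          refine Finset.sum_le_sum fun j _ => mul_le_mul_of_nonneg_left (hcol j) (abs_nonneg _)
      _ = (∑ j, |D i j|) * K := by rw [← Finset.sum_mul]
      _ ≤ r i * K := mul_le_mul_of_nonneg_right (hD i) hK0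
  have hsq : ∑ a, ∑ i, ((X * Dᵀ) a i) ^ 2 ≤ ∑ i, (r i * K) ^ 2 := by
    rw [Finset.sum_comm]
    refine Finset.sum_le_sum fun i _ => ?_
    have h1 : ∑ a, ((X * Dᵀ) a i) ^ 2 = ∑ a, (∑ j, X a j * D i j) ^ 2 := by
      refine Finset.sum_congr rfl fun a _ => ?_
      simp [Matrix.mul_apply, Matrix.transpose_apply]
    rw [h1]
    have h2 := hrow i
    have h3 : 0 ≤ ∑ a, (∑ j, X a j * D i j) ^ 2 := Finset.sum_nonneg fun a _ => sq_nonneg _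
    have h4 : 0 ≤ r i * K := mul_nonneg (hr i) hK0
    nlinarith [Real.sq_sqrt h3, Real.sqrt_nonneg (∑ a, (∑ j, X a j * D i j) ^ 2)]
  calc frobNorm (X * Dᵀ) = Real.sqrt (∑ a, ∑ i, ((X * Dᵀ) a i) ^ 2) := rfl
    _ ≤ Real.sqrt (∑ i, (r i * K) ^ 2) := Real.sqrt_le_sqrt hsq
    _ = Real.sqrt (K ^ 2 * ∑ i, (r i) ^ 2) := by
        congr 1
        rw [Finset.mul_sum]
        exact Finset.sum_congr rfl fun i _ => by ring
    _ = K * Real.sqrt (∑ i, (r i) ^ 2) := by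
        rw [Real.sqrt_mul (sq_nonneg K), Real.sqrt_sq hK0]

/-- If `g` is differentiable at `X` with derivative `g'` satisfying
`‖g' H‖_{(2,∞)} ≤ C ‖H‖_F` for all `H`, then `Att X = X ⬝ softmax(g X)ᵀ` is differentiable
at `X` and its derivative satisfies
`‖DAtt_X(H)‖_F ≤ (‖softmax(g X)‖_F + √2 ⬝ ‖Xᵀ‖_{(∞,2)} ⬝ C) ⬝ ‖H‖_F`. -/
theorem attention_derivative_bound {d n m : ℕ}
    (g : Matrix (Fin d) (Fin n) ℝ → Matrix (Fin m) (Fin n) ℝ)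
    (X : Matrix (Fin d) (Fin n) ℝ)
    (g' : Matrix (Fin d) (Fin n) ℝ →L[ℝ] Matrix (Fin m) (Fin n) ℝ)
    (hg : HasFDerivAt g g' X)
    (C : ℝ) (hC : 0 ≤ C)
    (hgC : ∀ H, norm2Inf (g' H) ≤ C * frobNorm H) :
    ∃ Att' : Matrix (Fin d) (Fin n) ℝ →L[ℝ] Matrix (Fin d) (Fin m) ℝ,
      HasFDerivAt (fun Z => Z * (softmaxM (g Z))ᵀ) Att' X ∧
      ∀ H, frobNorm (Att' H) ≤
        (frobNorm (softmaxM (g X)) + Real.sqrt 2 * normInf2 Xᵀ * C) * frobNorm H := by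
  have hgT : HasFDerivAt (fun Z => (softmaxM (g Z))ᵀ)
      ((transCLM m n).comp ((smDeriv m n (g X)).comp g')) X :=
    (transCLM m n).hasFDerivAt.comp X ((hasFDerivAt_softmaxM m n (g X)).comp X hg)
  have hmain := (mulCLM d n m).hasFDerivAt_of_bilinear (hasFDerivAt_id X) hgT
  have hfun : (fun y : Matrix (Fin d) (Fin n) ℝ => mulCLM d n m (id y) (softmaxM (g y))ᵀ)
      = fun Z => Z * (softmaxM (g Z))ᵀ :=
    funext fun y => by rw [id_eq, mulCLM_apply]
  erw [hfun] at hmain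
  refine ⟨_, hmain, ?_⟩
  intro H
  simp only [ContinuousLinearMap.add_apply, ContinuousLinearMap.precompR_apply,
    ContinuousLinearMap.precompL_apply, ContinuousLinearMap.coe_comp', Function.comp_apply,
    ContinuousLinearMap.id_apply, id_eq, mulCLM_apply, transCLM_apply,
    ContinuousLinearMap.compL_apply]
  set S := softmaxM (g X) with hSdef
  set E := g' H with hEdef
  set D := smDeriv m n (g X) E with hDdef
  set K := normInf2 Xᵀ with hK
  have hK0 : 0 ≤ K := normInf2_nonneg _
  have hH0 : 0 ≤ frobNorm H := frobNorm_nonneg_s1 H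
  have hS0 : 0 ≤ frobNorm S := frobNorm_nonneg_s1 S
  -- first term bound
  have hr0 : ∀ i : Fin m, 0 ≤ ⨆ j, |E i j| := fun i => Real.iSup_nonneg fun j => abs_nonneg _
  have hxr : ∀ (i : Fin m) (j : Fin n), |E i j| ≤ ⨆ j', |E i j'| := fun i j =>
    le_ciSup (f := fun j' => |E i j'|) (Set.Finite.bddAbove (Set.finite_range _)) j
  have hDrow : ∀ i, ∑ j, |D i j| ≤ ⨆ j', |E i j'| := by
    intro i
    have habs : ∀ j, |D i j| = S i j * |E i j - ∑ k, S i k * E i k| := fun j => by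
      rw [hDdef, smDeriv_apply, abs_mul, abs_of_nonneg (softmax_nonneg _ i j)]
    rw [Finset.sum_congr rfl fun j _ => habs j]
    exact row_l1_bound (fun j => S i j) (fun j => E i j) (⨆ j', |E i j'|)
      (fun j => softmax_nonneg _ i j) (softmax_row_sum_le _ i) (hxr i) (hr0 i)
  have hterm1 : frobNorm (X * Dᵀ) ≤ K * (C * frobNorm H) := by
    have h1 := frob_mul_transpose_bound X D (fun i => ⨆ j', |E i j'|) hr0 hDrow
    have h2 : Real.sqrt (∑ i, (⨆ j', |E i j'|) ^ 2) = norm2Inf E := rfl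
    rw [h2] at h1
    calc frobNorm (X * Dᵀ) ≤ K * norm2Inf E := h1
      _ ≤ K * (C * frobNorm H) := mul_le_mul_of_nonneg_left (hgC H) hK0
  -- second term bound
  have hterm2 : frobNorm (H * Sᵀ) ≤ frobNorm S * frobNorm H := by
    rw [frobNorm_eq_norm, frobNorm_eq_norm, frobNorm_eq_norm]
    calc ‖H * Sᵀ‖ ≤ ‖H‖ * ‖Sᵀ‖ := Matrix.frobenius_norm_mul H Sᵀ
      _ = ‖S‖ * ‖H‖ := by rw [Matrix.frobenius_norm_transpose]; ring
  have htri : frobNorm (X * Dᵀ + H * Sᵀ) ≤ frobNorm (X * Dᵀ) + frobNorm (H * Sᵀ) := by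
    rw [frobNorm_eq_norm, frobNorm_eq_norm, frobNorm_eq_norm]
    exact norm_add_le _ _
  have hsqrt2 : (1 : ℝ) ≤ Real.sqrt 2 := by
    rw [show (1:ℝ) = Real.sqrt 1 by rw [Real.sqrt_one]]
    exact Real.sqrt_le_sqrt (by norm_num)
  calc frobNorm (X * Dᵀ + H * Sᵀ) ≤ frobNorm (X * Dᵀ) + frobNorm (H * Sᵀ) := htri
    _ ≤ K * (C * frobNorm H) + frobNorm S * frobNorm H := add_le_add hterm1 hterm2
    _ ≤ (frobNorm S + Real.sqrt 2 * K * C) * frobNorm H := by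
        nlinarith [mul_nonneg (mul_nonneg hK0 hC) hH0]
end

section
/- For Q, K, V ∈ ℝ^{d×n}, set u = ‖Q‖_F, v = ‖Kᵀ‖_{(∞,2)}, w = ‖Vᵀ‖_{(∞,2)}, and assume max{uv, uw, vw} > 0 (i.e. at least two of Q, K, V are nonzero). Define the normalized Transformer score g(Q,K,V) = Qᵀ K / max{uv, uw, vw} ∈ ℝ^{n×n} and the attention map Att(Q,K,V) = V · softmax(g(Q,K,V))ᵀ ∈ ℝ^{d×n}. Then Att is Lipschitz continuous with respect to the Frobenius norm on the concatenated input X = (Q‖K‖V) (so ‖X‖_F² = ‖Q‖_F² + ‖K‖_F² + ‖V‖_F²), with Lipschitz constant at most e^{√3} √(m/n) + 2√6 where m = n (so the constant is e^{√3} + 2√6): for all admissible inputs (Q,K,V) and (Q',K',V'), ‖Att(Q,K,V) − Att(Q',K',V')‖_F ≤ (e^{√3} + 2√6) · √(‖Q−Q'‖_F² + ‖K−K'‖_F² + ‖V−V'‖_F²). -/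
open scoped BigOperators Matrix

/-- The LipschitzNorm-normalized Transformer scaling factor
`max{uv, uw, vw}` with `u = ‖Q‖_F`, `v = ‖Kᵀ‖_{(∞,2)}`, `w = ‖Vᵀ‖_{(∞,2)}`. -/
noncomputable def tDen {d n : ℕ} (Q K V : Matrix (Fin d) (Fin n) ℝ) : ℝ :=
  max (max (frobNorm Q * normInf2 Kᵀ) (frobNorm Q * normInf2 Vᵀ))
    (normInf2 Kᵀ * normInf2 Vᵀ)

/-- The normalized Transformer attention
`Att(Q,K,V) = V ⬝ softmax(Qᵀ K / max{uv, uw, vw})ᵀ`. -/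
noncomputable def tAtt {d n : ℕ} (Q K V : Matrix (Fin d) (Fin n) ℝ) :
    Matrix (Fin d) (Fin n) ℝ :=
  V * (softmaxM ((tDen Q K V)⁻¹ • (Qᵀ * K)))ᵀ


noncomputable def E {ι : Type*} [Fintype ι] (f : ι → ℝ) : ℝ := Real.sqrt (∑ i, f i ^ 2)

variable {ι : Type*} [Fintype ι]

lemma E_eq_norm (f : ι → ℝ) : E f = ‖(WithLp.equiv 2 (ι → ℝ)).symm f‖ := by
  rw [EuclideanSpace.norm_eq]; simp [E, sq_abs]

lemma E_nonneg (f : ι → ℝ) : 0 ≤ E f := Real.sqrt_nonneg _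

lemma E_sq (f : ι → ℝ) : E f ^ 2 = ∑ i, f i ^ 2 :=
  Real.sq_sqrt (by positivity)

lemma E_mono {f g : ι → ℝ} (h : ∀ i, |f i| ≤ g i) : E f ≤ E g := by
  apply Real.sqrt_le_sqrt
  apply Finset.sum_le_sum
  intro i _
  calc f i ^ 2 = |f i| ^ 2 := (sq_abs _).symm
    _ ≤ g i ^ 2 := pow_le_pow_left₀ (abs_nonneg _) (h i) 2

lemma E_triangle (f g : ι → ℝ) : E (fun i => f i + g i) ≤ E f + E g := by
  rw [E_eq_norm, E_eq_norm, E_eq_norm]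
  exact norm_add_le ((WithLp.equiv 2 (ι → ℝ)).symm f) ((WithLp.equiv 2 (ι → ℝ)).symm g)

lemma E_sum_le {κ : Type*} (s : Finset κ) (F : κ → ι → ℝ) :
    E (fun i => ∑ k ∈ s, F k i) ≤ ∑ k ∈ s, E (F k) := by
  classical
  induction s using Finset.induction with
  | empty => simp [E]
  | insert a s hk ih =>
      rw [Finset.sum_insert hk]
      calc E (fun i => ∑ k ∈ insert a s, F k i)
          = E (fun i => F a i + ∑ k ∈ s, F k i) := by
            congr 1; funext i; rw [Finset.sum_insert hk]
        _ ≤ E (F a) + E (fun i => ∑ k ∈ s, F k i) := E_triangle _ _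
        _ ≤ E (F a) + ∑ k ∈ s, E (F k) := by linarith [ih]

lemma E_smul (c : ℝ) (f : ι → ℝ) : E (fun i => c * f i) = |c| * E f := by
  simp only [E, mul_pow, ← Finset.mul_sum]
  rw [Real.sqrt_mul (sq_nonneg c), Real.sqrt_sq_eq_abs]

lemma E_CS (f g : ι → ℝ) : |∑ i, f i * g i| ≤ E f * E g := by
  have h1 : |∑ i, f i * g i| ≤ ∑ i, |f i| * |g i| := by
    refine (Finset.abs_sum_le_sum_abs _ _).trans ?_
    apply Finset.sum_le_sum; intro i _; rw [abs_mul]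
  refine h1.trans ?_
  have h2 := Real.sum_mul_le_sqrt_mul_sqrt Finset.univ (fun i => |f i|) (fun i => |g i|)
  simpa [E, sq_abs] using h2

noncomputable def smx {n : ℕ} (a : Fin n → ℝ) (k : Fin n) : ℝ :=
  Real.exp (a k) / ∑ l, Real.exp (a l)

variable {n : ℕ}

lemma sum_exp_pos (hn : 0 < n) (a : Fin n → ℝ) : 0 < ∑ l, Real.exp (a l) := by
  haveI : Nonempty (Fin n) := Fin.pos_iff_nonempty.mp hn
  exact Finset.sum_pos (fun _ _ => Real.exp_pos _) Finset.univ_nonempty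

lemma smx_nonneg (a : Fin n → ℝ) (k : Fin n) : 0 ≤ smx a k := by
  unfold smx; positivity

lemma smx_sum (hn : 0 < n) (a : Fin n → ℝ) : ∑ k, smx a k = 1 := by
  unfold smx
  rw [← Finset.sum_div]
  exact div_self (ne_of_gt (sum_exp_pos hn a))

lemma smx_ratio (hn : 0 < n) {a b : Fin n → ℝ} {δ : ℝ}
    (h : ∀ k, |a k - b k| ≤ δ) (k : Fin n) :
    smx a k ≤ Real.exp (2 * δ) * smx b k := by
  have hb := sum_exp_pos hn b
  have ha := sum_exp_pos hn a
  have h1 : Real.exp (a k) ≤ Real.exp δ * Real.exp (b k) := by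
    rw [← Real.exp_add]
    exact Real.exp_le_exp.mpr (by have := abs_le.mp (h k); linarith)
  have h2 : Real.exp (-δ) * ∑ l, Real.exp (b l) ≤ ∑ l, Real.exp (a l) := by
    rw [Finset.mul_sum]
    apply Finset.sum_le_sum
    intro l _
    rw [← Real.exp_add]
    exact Real.exp_le_exp.mpr (by have := abs_le.mp (h l); linarith)
  have h3 : (0:ℝ) < Real.exp (-δ) * ∑ l, Real.exp (b l) := by positivity
  calc smx a k ≤ (Real.exp δ * Real.exp (b k)) / (Real.exp (-δ) * ∑ l, Real.exp (b l)) := by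
        apply div_le_div₀ (by positivity) h1 h3 h2
    _ = Real.exp (2 * δ) * smx b k := by
        unfold smx
        rw [Real.exp_neg]
        field_simp
        rw [sq, ← Real.exp_add]
        ring_nf

lemma smx_l1 (hn : 0 < n) {a b : Fin n → ℝ} {δ : ℝ} (hδ : 0 ≤ δ)
    (h : ∀ k, |a k - b k| ≤ δ) :
    ∑ k, |smx a k - smx b k| ≤ (2 / Real.log 2) * δ := by
  have hsym : ∀ k, |b k - a k| ≤ δ := fun k => by rw [abs_sub_comm]; exact h k
  set t := Real.exp (2 * δ) with ht
  have ht1 : 1 ≤ t := by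
    rw [ht, ← Real.exp_zero]; exact Real.exp_le_exp.mpr (by linarith)
  have ht0 : 0 < t := lt_of_lt_of_le one_pos ht1
  have r1 : ∀ k, smx a k ≤ t * smx b k := smx_ratio hn h
  have r2 : ∀ k, smx b k ≤ t * smx a k := smx_ratio hn hsym
  have bnd1 : ∑ k, |smx a k - smx b k| ≤ t - 1 := by
    have : ∀ k, |smx a k - smx b k| ≤ (t - 1) * smx b k := by
      intro k
      rw [abs_sub_le_iff]
      constructor
      · have := r1 k; linarith
      · have h2 := r2 k
        have hb := smx_nonneg b k
        have ha := smx_nonneg a k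
        have : smx a k ≥ smx b k / t := by
          rw [ge_iff_le, div_le_iff₀ ht0]; linarith [r2 k]
        have h3 : smx b k - smx a k ≤ smx b k - smx b k / t := by linarith
        refine h3.trans ?_
        rw [div_eq_mul_inv]
        have : t⁻¹ ≥ 2 - t := by
          rw [ge_iff_le, ← sub_nonneg]
          have : t⁻¹ - (2 - t) = (t - 1) ^ 2 / t := by field_simp; ring
          rw [this]; positivity
        nlinarith [smx_nonneg b k]
    calc ∑ k, |smx a k - smx b k| ≤ ∑ k, (t - 1) * smx b k := Finset.sum_le_sum fun k _ => this k
      _ = (t - 1) * ∑ k, smx b k := by rw [Finset.mul_sum]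
      _ = t - 1 := by rw [smx_sum hn]; ring
  have bnd2 : ∑ k, |smx a k - smx b k| ≤ 2 * (1 - t⁻¹) := by
    have key : ∀ k, |smx a k - smx b k| ≤ (1 - t⁻¹) * (smx a k + smx b k) := by
      intro k
      have ha := smx_nonneg a k
      have hb := smx_nonneg b k
      have hti : t⁻¹ ≤ 1 := by
        rw [inv_le_one_iff₀]; right; exact ht1
      rw [abs_sub_le_iff]
      constructor
      · have : smx b k ≥ t⁻¹ * smx a k := by
          rw [ge_iff_le, inv_mul_le_iff₀ ht0]; linarith [r1 k]
        nlinarith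
      · have : smx a k ≥ t⁻¹ * smx b k := by
          rw [ge_iff_le, inv_mul_le_iff₀ ht0]; linarith [r2 k]
        nlinarith
    calc ∑ k, |smx a k - smx b k| ≤ ∑ k, (1 - t⁻¹) * (smx a k + smx b k) :=
          Finset.sum_le_sum fun k _ => key k
      _ = (1 - t⁻¹) * (∑ k, smx a k + ∑ k, smx b k) := by
          rw [← Finset.sum_add_distrib, Finset.mul_sum]
      _ = 2 * (1 - t⁻¹) := by rw [smx_sum hn, smx_sum hn]; ring
  have hL : (0:ℝ) < Real.log 2 := Real.log_pos (by norm_num)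
  have hL1 : Real.log 2 < 1 := by
    have := Real.log_two_lt_d9; linarith
  rcases le_or_gt (2 * δ) (Real.log 2) with hc | hc
  · -- small case : use exp(2δ) - 1 ≤ (2/L) δ  via convexity chord
    set L := Real.log 2 with hLdef
    have hchord : t ≤ 1 + (2 * δ) / L := by
      have hmem := convexOn_exp.2 (x := (0:ℝ)) (y := L) (Set.mem_univ (0:ℝ)) (Set.mem_univ L)
        (show (0:ℝ) ≤ 1 - (2*δ)/L by
          have : (2*δ)/L ≤ 1 := by rw [div_le_one hL]; exact hc
          linarith)
        (show (0:ℝ) ≤ (2*δ)/L by positivity)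
        (by ring)
      have e1 : (1 - (2*δ)/L) • (0:ℝ) + ((2*δ)/L) • L = 2 * δ := by
        simp only [smul_eq_mul, mul_zero, zero_add]
        exact div_mul_cancel₀ _ hL.ne'
      rw [e1] at hmem
      have e2 : Real.exp L = 2 := Real.exp_log (by norm_num)
      rw [Real.exp_zero, e2] at hmem
      simp only [smul_eq_mul] at hmem
      calc t ≤ (1 - (2*δ)/L) * 1 + ((2*δ)/L) * 2 := hmem
        _ = 1 + (2*δ)/L := by ring
    refine bnd1.trans ?_
    rw [div_mul_eq_mul_div, mul_comm]
    have : t - 1 ≤ (2 * δ) / L := by linarith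
    calc t - 1 ≤ (2*δ)/L := this
      _ = δ * 2 / L := by ring
  · -- large case : use 2(1 - t⁻¹)
    set L := Real.log 2 with hLdef
    have htan : t⁻¹ ≥ (1 + L - 2*δ) / 2 := by
      have h1 : (L - 2*δ) + 1 ≤ Real.exp (L - 2*δ) := Real.add_one_le_exp _
      have h2 : Real.exp (L - 2*δ) = 2 * t⁻¹ := by
        rw [Real.exp_sub, Real.exp_log (by norm_num : (0:ℝ) < 2), ht, ← Real.exp_neg]
        ring_nf
        rw [Real.exp_neg]
      rw [h2] at h1
      linarith
    refine bnd2.trans ?_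
    have key : 2 * (1 - t⁻¹) ≤ 1 - L + 2*δ := by linarith
    refine key.trans ?_
    rw [div_mul_eq_mul_div, le_div_iff₀ hL]
    nlinarith

lemma smx_le (hn : 0 < n) {a : Fin n → ℝ} (h : ∀ k, |a k| ≤ 1) (k : Fin n) :
    smx a k ≤ Real.exp 1 ^ 2 / n := by
  have hnum : Real.exp (a k) ≤ Real.exp 1 := Real.exp_le_exp.mpr (abs_le.mp (h k)).2
  have hden : (n : ℝ) * Real.exp (-1) ≤ ∑ l, Real.exp (a l) := by
    calc (n:ℝ) * Real.exp (-1) = ∑ _l : Fin n, Real.exp (-1) := by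
          rw [Finset.sum_const, Finset.card_univ, Fintype.card_fin, nsmul_eq_mul]
      _ ≤ ∑ l, Real.exp (a l) :=
          Finset.sum_le_sum fun l _ => Real.exp_le_exp.mpr (by linarith [(abs_le.mp (h l)).1])
  have hn' : (0:ℝ) < n := by exact_mod_cast hn
  have hden0 : (0:ℝ) < (n:ℝ) * Real.exp (-1) := by positivity
  calc smx a k ≤ Real.exp 1 / ((n:ℝ) * Real.exp (-1)) :=
        div_le_div₀ (Real.exp_pos 1).le hnum hden0 hden
    _ = Real.exp 1 ^ 2 / n := by
        rw [Real.exp_neg]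
        field_simp

lemma smx_sq_sum (hn : 0 < n) {a : Fin n → ℝ} (h : ∀ k, |a k| ≤ 1) :
    ∑ k, smx a k ^ 2 ≤ Real.exp 1 ^ 2 / n := by
  calc ∑ k, smx a k ^ 2 = ∑ k, smx a k * smx a k := by simp [sq]
    _ ≤ ∑ k, (Real.exp 1 ^ 2 / n) * smx a k :=
        Finset.sum_le_sum fun k _ =>
          mul_le_mul_of_nonneg_right (smx_le hn h k) (smx_nonneg a k)
    _ = (Real.exp 1 ^ 2 / n) * ∑ k, smx a k := by rw [Finset.mul_sum]
    _ = Real.exp 1 ^ 2 / n := by rw [smx_sum hn]; ring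
section MatrixLemmas
open Finset

variable {d n : ℕ}

lemma le_E {ι : Type*} [Fintype ι] (f : ι → ℝ) (i : ι) : |f i| ≤ E f := by
  rw [← Real.sqrt_sq_eq_abs]
  exact Real.sqrt_le_sqrt (Finset.single_le_sum (fun i _ => sq_nonneg (f i)) (Finset.mem_univ i))

lemma softmaxM_apply (G : Matrix (Fin n) (Fin n) ℝ) (j k : Fin n) :
    softmaxM G j k = smx (fun l => G j l) k := rfl

lemma frob_nonneg (M : Matrix (Fin d) (Fin n) ℝ) : 0 ≤ frobNorm M := Real.sqrt_nonneg _

lemma frob_eq_E_cols (M : Matrix (Fin d) (Fin n) ℝ) :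
    frobNorm M = E (fun j => E (fun i => M i j)) := by
  unfold frobNorm E
  rw [Finset.sum_comm]
  congr 1
  refine Finset.sum_congr rfl fun j _ => ?_
  rw [Real.sq_sqrt (by positivity)]

lemma colE_le_frob (M : Matrix (Fin d) (Fin n) ℝ) (k : Fin n) :
    E (fun i => M i k) ≤ frobNorm M := by
  rw [frob_eq_E_cols]
  have := le_E (fun j => E (fun i => M i j)) k
  rwa [abs_of_nonneg (E_nonneg _)] at this

lemma colE_le_normInf2 (V : Matrix (Fin d) (Fin n) ℝ) (k : Fin n) :
    E (fun i => V i k) ≤ normInf2 Vᵀ := by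
  haveI : Nonempty (Fin n) := ⟨k⟩
  refine le_ciSup_of_le (Set.Finite.bddAbove (Set.finite_range _)) k ?_
  exact le_of_eq rfl

lemma normInf2_nonneg_s9 (hn : 0 < n) (V : Matrix (Fin d) (Fin n) ℝ) : 0 ≤ normInf2 Vᵀ :=
  le_trans (E_nonneg _) (colE_le_normInf2 V ⟨0, hn⟩)

lemma eq_zero_of_normInf2 {V : Matrix (Fin d) (Fin n) ℝ} (h : normInf2 Vᵀ ≤ 0) : V = 0 := by
  ext i k
  have h1 : E (fun i => V i k) ≤ 0 := le_trans (colE_le_normInf2 V k) h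
  have h3 : E (fun i => V i k) = 0 := le_antisymm h1 (E_nonneg _)
  have hs : ∑ i, V i k ^ 2 = 0 := by
    have := E_sq (fun i => V i k)
    rw [h3] at this
    simpa using this.symm
  have := (Finset.sum_eq_zero_iff_of_nonneg (fun i _ => sq_nonneg (V i k))).mp hs i (Finset.mem_univ i)
  have hz : V i k = 0 := by
    have h2 := this
    nlinarith [sq_nonneg (V i k)]
  simpa using hz

lemma frob_triangle (A B : Matrix (Fin d) (Fin n) ℝ) :
    frobNorm (A + B) ≤ frobNorm A + frobNorm B := by
  rw [frob_eq_E_cols, frob_eq_E_cols, frob_eq_E_cols]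
  refine le_trans (E_mono (g := fun j => E (fun i => A i j) + E (fun i => B i j)) ?_)
    (E_triangle _ _)
  intro j
  rw [abs_of_nonneg (E_nonneg _)]
  have : (fun i => (A + B) i j) = fun i => A i j + B i j := by
    funext i; simp [Matrix.add_apply]
  rw [this]
  exact E_triangle (fun i => A i j) (fun i => B i j)

lemma frob_neg (A : Matrix (Fin d) (Fin n) ℝ) : frobNorm (-A) = frobNorm A := by
  unfold frobNorm
  congr 1
  refine Finset.sum_congr rfl fun i _ => Finset.sum_congr rfl fun j _ => ?_
  simp [Matrix.neg_apply]

lemma frob_sub_comm (A B : Matrix (Fin d) (Fin n) ℝ) : frobNorm (A - B) = frobNorm (B - A) := by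
  rw [← neg_sub B A, frob_neg]

lemma frob_le_add_frob (A B : Matrix (Fin d) (Fin n) ℝ) :
    frobNorm A ≤ frobNorm B + frobNorm (A - B) := by
  have := frob_triangle B (A - B)
  simpa using this

lemma normInf2_le_add (V V' : Matrix (Fin d) (Fin n) ℝ) (hn : 0 < n) :
    normInf2 Vᵀ ≤ normInf2 V'ᵀ + frobNorm (V - V') := by
  haveI : Nonempty (Fin n) := Fin.pos_iff_nonempty.mp hn
  refine ciSup_le fun k => ?_
  have e1 : Real.sqrt (∑ i, (Vᵀ k i) ^ 2) = E (fun i => V i k) := rfl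
  rw [e1]
  have h2 : (fun i => V i k) = fun i => V' i k + (V - V') i k := by
    funext i; simp [Matrix.sub_apply]
  calc E (fun i => V i k) ≤ E (fun i => V' i k) + E (fun i => (V - V') i k) := by
        rw [h2]; exact E_triangle _ _
    _ ≤ normInf2 V'ᵀ + frobNorm (V - V') :=
        add_le_add (colE_le_normInf2 V' k) (colE_le_frob (V - V') k)

lemma abs_normInf2_sub (hn : 0 < n) (V V' : Matrix (Fin d) (Fin n) ℝ) :
    |normInf2 Vᵀ - normInf2 V'ᵀ| ≤ frobNorm (V - V') := by
  rw [abs_sub_le_iff]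
  constructor
  · linarith [normInf2_le_add V V' hn]
  · have := normInf2_le_add V' V hn
    rw [frob_sub_comm] at this
    linarith

lemma abs_frob_sub (Q Q' : Matrix (Fin d) (Fin n) ℝ) :
    |frobNorm Q - frobNorm Q'| ≤ frobNorm (Q - Q') := by
  rw [abs_sub_le_iff]
  constructor
  · linarith [frob_le_add_frob Q Q']
  · have := frob_le_add_frob Q' Q
    rw [frob_sub_comm] at this
    linarith

lemma mulT_apply (Q K : Matrix (Fin d) (Fin n) ℝ) (j k : Fin n) :
    (Qᵀ * K) j k = ∑ i, Q i j * K i k := by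
  simp [Matrix.mul_apply]

lemma abs_dot_le (Q K : Matrix (Fin d) (Fin n) ℝ) (j k : Fin n) :
    |(Qᵀ * K) j k| ≤ E (fun i => Q i j) * E (fun i => K i k) := by
  rw [mulT_apply]; exact E_CS _ _

end MatrixLemmas
section Bounds
open Finset

variable {d n : ℕ}

lemma term1_bound (hn : 0 < n) (M : Matrix (Fin d) (Fin n) ℝ) (G : Matrix (Fin n) (Fin n) ℝ)
    (hG : ∀ j k, |G j k| ≤ 1) :
    frobNorm (M * (softmaxM G)ᵀ) ≤ Real.exp 1 * frobNorm M := by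
  have hn' : (0:ℝ) < n := by exact_mod_cast hn
  have key : ∀ i j, ((M * (softmaxM G)ᵀ) i j)^2 ≤ (∑ k, M i k ^ 2) * (Real.exp 1 ^ 2 / n) := by
    intro i j
    have he : (M * (softmaxM G)ᵀ) i j = ∑ k, M i k * smx (fun l => G j l) k := by
      simp [Matrix.mul_apply, Matrix.transpose_apply, softmaxM_apply]
    rw [he]
    calc (∑ k, M i k * smx (fun l => G j l) k)^2
        ≤ (∑ k, M i k ^ 2) * (∑ k, smx (fun l => G j l) k ^ 2) :=
          Finset.sum_mul_sq_le_sq_mul_sq _ _ _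
      _ ≤ (∑ k, M i k ^ 2) * (Real.exp 1 ^ 2 / n) := by
          apply mul_le_mul_of_nonneg_left (smx_sq_sum hn (fun k => hG j k)) (by positivity)
  have h1 : ∑ i, ∑ j, ((M * (softmaxM G)ᵀ) i j)^2
      ≤ Real.exp 1 ^ 2 * ∑ i, ∑ k, M i k ^ 2 := by
    calc ∑ i, ∑ j, ((M * (softmaxM G)ᵀ) i j)^2
        ≤ ∑ i, ∑ _j : Fin n, (∑ k, M i k ^ 2) * (Real.exp 1 ^ 2 / n) :=
          Finset.sum_le_sum fun i _ => Finset.sum_le_sum fun j _ => key i j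
      _ = ∑ i, (n : ℝ) * ((∑ k, M i k ^ 2) * (Real.exp 1 ^ 2 / n)) := by
          refine Finset.sum_congr rfl fun i _ => ?_
          rw [Finset.sum_const, Finset.card_univ, Fintype.card_fin, nsmul_eq_mul]
      _ = Real.exp 1 ^ 2 * ∑ i, ∑ k, M i k ^ 2 := by
          rw [Finset.mul_sum]
          refine Finset.sum_congr rfl fun i _ => ?_
          field_simp
  unfold frobNorm
  refine le_trans (Real.sqrt_le_sqrt h1) ?_
  rw [Real.sqrt_mul (sq_nonneg _), Real.sqrt_sq (Real.exp_pos 1).le]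

lemma term2_bound (hn : 0 < n) (V : Matrix (Fin d) (Fin n) ℝ) (G G' : Matrix (Fin n) (Fin n) ℝ)
    (δ : Fin n → ℝ) (hδ : ∀ j, 0 ≤ δ j) (h : ∀ j k, |G j k - G' j k| ≤ δ j) :
    frobNorm (V * (softmaxM G - softmaxM G')ᵀ) ≤
      (2 / Real.log 2) * E (fun j => normInf2 Vᵀ * δ j) := by
  set w := normInf2 Vᵀ with hwdef
  have hw : 0 ≤ w := normInf2_nonneg_s9 hn V
  have hL : (0:ℝ) < 2 / Real.log 2 := by
    have := Real.log_pos (by norm_num : (1:ℝ) < 2); positivity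
  have key : ∀ j, ∑ i, ((V * (softmaxM G - softmaxM G')ᵀ) i j)^2
      ≤ ((2 / Real.log 2) * (w * δ j))^2 := by
    intro j
    set x : Fin n → ℝ := fun k => softmaxM G j k - softmaxM G' j k with hx
    have hentry : (fun i => (V * (softmaxM G - softmaxM G')ᵀ) i j) =
        fun i => ∑ k, x k * V i k := by
      funext i
      simp only [Matrix.mul_apply, Matrix.transpose_apply, Matrix.sub_apply, hx]
      exact Finset.sum_congr rfl fun k _ => by ring
    have h1 : E (fun i => (V * (softmaxM G - softmaxM G')ᵀ) i j) ≤ ∑ k, |x k| * w := by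
      rw [hentry]
      refine le_trans (E_sum_le Finset.univ (fun k i => x k * V i k)) ?_
      refine Finset.sum_le_sum fun k _ => ?_
      rw [E_smul]
      exact mul_le_mul_of_nonneg_left (colE_le_normInf2 V k) (abs_nonneg _)
    have h2 : ∑ k, |x k| ≤ (2 / Real.log 2) * δ j := by
      have := smx_l1 (a := fun l => G j l) (b := fun l => G' j l) hn (hδ j) (fun k => h j k)
      exact this
    have h3 : E (fun i => (V * (softmaxM G - softmaxM G')ᵀ) i j)
        ≤ (2 / Real.log 2) * (w * δ j) := by
      refine h1.trans ?_
      rw [← Finset.sum_mul]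
      calc (∑ k, |x k|) * w ≤ ((2 / Real.log 2) * δ j) * w :=
            mul_le_mul_of_nonneg_right h2 hw
        _ = (2 / Real.log 2) * (w * δ j) := by ring
    have h4 := E_sq (fun i => (V * (softmaxM G - softmaxM G')ᵀ) i j)
    rw [← h4]
    exact pow_le_pow_left₀ (E_nonneg _) h3 2
  unfold frobNorm
  rw [Finset.sum_comm]
  have h5 : ∑ j, ∑ i, ((V * (softmaxM G - softmaxM G')ᵀ) i j)^2
      ≤ ∑ j, ((2 / Real.log 2) * (w * δ j))^2 := Finset.sum_le_sum fun j _ => key j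
  refine le_trans (Real.sqrt_le_sqrt h5) ?_
  have h6 : ∑ j, ((2 / Real.log 2) * (w * δ j))^2
      = (2 / Real.log 2)^2 * ∑ j, (w * δ j)^2 := by
    rw [Finset.mul_sum]
    exact Finset.sum_congr rfl fun j _ => by ring
  rw [h6, Real.sqrt_mul (sq_nonneg _), Real.sqrt_sq hL.le]
  exact le_of_eq rfl

end Bounds
section Steps
open Finset

variable {d n : ℕ}

lemma inv_smul_diff (a b D D' : ℝ) (hD : 0 < D) (hD' : 0 < D') :
    |D⁻¹ * a - D'⁻¹ * b| ≤ |a - b| / D' + |a| * |D - D'| / (D * D') := by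
  have hsplit : D⁻¹ * a - D'⁻¹ * b = (a - b)/D' + a * (D' - D)/(D * D') := by
    field_simp
    ring
  rw [hsplit]
  refine (abs_add_le _ _).trans ?_
  rw [abs_div, abs_div, abs_mul, abs_of_pos hD', abs_of_pos (mul_pos hD hD'), abs_sub_comm D' D]

lemma frob_zero : frobNorm (0 : Matrix (Fin d) (Fin n) ℝ) = 0 := by
  simp [frobNorm]

lemma hL_pos : (0:ℝ) < 2 / Real.log 2 := by
  have := Real.log_pos (by norm_num : (1:ℝ) < 2); positivity

lemma stepQ (hn : 0 < n) (Q Q' K V : Matrix (Fin d) (Fin n) ℝ) :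
    frobNorm (tAtt Q K V - tAtt Q' K V) ≤ (2 / Real.log 2) * (2 * frobNorm (Q - Q')) := by
  have hL := hL_pos
  set v := normInf2 Kᵀ with hv_def
  set w := normInf2 Vᵀ with hw_def
  set u := frobNorm Q with hu_def
  set u' := frobNorm Q' with hu'_def
  have hv0 : 0 ≤ v := normInf2_nonneg_s9 hn K
  have hw0 : 0 ≤ w := normInf2_nonneg_s9 hn V
  have hu0 : 0 ≤ u := frob_nonneg Q
  have hfd : 0 ≤ frobNorm (Q - Q') := frob_nonneg _
  have hRHS : 0 ≤ (2 / Real.log 2) * (2 * frobNorm (Q - Q')) := by positivity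
  by_cases hw' : w ≤ 0
  · have hV : V = 0 := eq_zero_of_normInf2 hw'
    rw [tAtt, tAtt, hV, Matrix.zero_mul, Matrix.zero_mul, sub_zero, frob_zero]
    exact hRHS
  by_cases hv' : v ≤ 0
  · have hK : K = 0 := eq_zero_of_normInf2 hv'
    have e1 : tAtt Q K V = tAtt Q' K V := by
      rw [tAtt, tAtt, hK, Matrix.mul_zero, Matrix.mul_zero, smul_zero, smul_zero]
    rw [e1, sub_self, frob_zero]
    exact hRHS
  push_neg at hw' hv'
  set D := tDen Q K V with hD_def
  set D' := tDen Q' K V with hD'_def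
  have hDeq : D = max (max (u*v) (u*w)) (v*w) := rfl
  have hD'eq : D' = max (max (u'*v) (u'*w)) (v*w) := rfl
  have hvwD : v*w ≤ D := by rw [hDeq]; exact le_max_right _ _
  have hvwD' : v*w ≤ D' := by rw [hD'eq]; exact le_max_right _ _
  have huvD : u*v ≤ D := by rw [hDeq]; exact le_trans (le_max_left _ _) (le_max_left _ _)
  have huwD : u*w ≤ D := by rw [hDeq]; exact le_trans (le_max_right _ _) (le_max_left _ _)
  have hD : 0 < D := lt_of_lt_of_le (mul_pos hv' hw') hvwD
  have hD' : 0 < D' := lt_of_lt_of_le (mul_pos hv' hw') hvwD'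
  set G := D⁻¹ • (Qᵀ * K) with hG_def
  set G' := D'⁻¹ • (Q'ᵀ * K) with hG'_def
  have hdiff : tAtt Q K V - tAtt Q' K V = V * (softmaxM G - softmaxM G')ᵀ := by
    rw [tAtt, tAtt, Matrix.transpose_sub, Matrix.mul_sub]
  set δ : Fin n → ℝ := fun j =>
    E (fun i => (Q - Q') i j) * v / D' + E (fun i => Q i j) * v * |D - D'| / (D * D') with hδ_def
  have hδ0 : ∀ j, 0 ≤ δ j := by
    intro j
    have h1 := E_nonneg (fun i => (Q - Q') i j)
    have h2 := E_nonneg (fun i => Q i j)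
    have := abs_nonneg (D - D')
    positivity
  have hbound : ∀ j k, |G j k - G' j k| ≤ δ j := by
    intro j k
    have e1 : G j k = D⁻¹ * ((Qᵀ * K) j k) := by rw [hG_def]; simp [Matrix.smul_apply]
    have e2 : G' j k = D'⁻¹ * ((Q'ᵀ * K) j k) := by rw [hG'_def]; simp [Matrix.smul_apply]
    rw [e1, e2]
    refine (inv_smul_diff _ _ _ _ hD hD').trans ?_
    have hab : (Qᵀ * K) j k - (Q'ᵀ * K) j k = ((Q - Q')ᵀ * K) j k := by
      rw [mulT_apply, mulT_apply, mulT_apply, ← Finset.sum_sub_distrib]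
      refine Finset.sum_congr rfl fun i _ => ?_
      simp [Matrix.sub_apply]
      ring
    have h1 : |(Qᵀ * K) j k - (Q'ᵀ * K) j k| ≤ E (fun i => (Q - Q') i j) * v := by
      rw [hab]
      refine (abs_dot_le _ _ _ _).trans ?_
      exact mul_le_mul_of_nonneg_left (colE_le_normInf2 K k) (E_nonneg _)
    have h2 : |(Qᵀ * K) j k| ≤ E (fun i => Q i j) * v := by
      refine (abs_dot_le _ _ _ _).trans ?_
      exact mul_le_mul_of_nonneg_left (colE_le_normInf2 K k) (E_nonneg _)
    have hδj : δ j = E (fun i => (Q - Q') i j) * v / D' +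
        E (fun i => Q i j) * v * |D - D'| / (D * D') := rfl
    rw [hδj]
    have hDD' : (0:ℝ) < D * D' := mul_pos hD hD'
    refine add_le_add ?_ ?_
    · exact (div_le_div_iff_of_pos_right hD').mpr h1
    · exact (div_le_div_iff_of_pos_right hDD').mpr (mul_le_mul_of_nonneg_right h2 (abs_nonneg _))
  have ht2 := term2_bound hn V G G' δ hδ0 hbound
  rw [hdiff]
  refine ht2.trans ?_
  refine mul_le_mul_of_nonneg_left ?_ hL.le
  -- E (fun j => w * δ j) ≤ 2 * frobNorm (Q - Q')
  set c1 := w * v / D' with hc1_def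
  set c2 := w * v * |D - D'| / (D * D') with hc2_def
  have hc1 : 0 ≤ c1 := by positivity
  have hc2 : 0 ≤ c2 := by positivity
  have hsplit : (fun j => w * δ j) =
      fun j => c1 * E (fun i => (Q - Q') i j) + c2 * E (fun i => Q i j) := by
    funext j
    rw [hδ_def, hc1_def, hc2_def]
    ring
  rw [hsplit]
  have htri : E (fun j => c1 * E (fun i => (Q - Q') i j) + c2 * E (fun i => Q i j))
      ≤ c1 * frobNorm (Q - Q') + c2 * u := by
    refine (E_triangle _ _).trans ?_
    rw [E_smul, E_smul, abs_of_nonneg hc1, abs_of_nonneg hc2,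
      ← frob_eq_E_cols, ← frob_eq_E_cols]
  refine htri.trans ?_
  -- c1 ≤ 1
  have hc1le : c1 ≤ 1 := by
    rw [hc1_def, div_le_one hD']
    calc w * v = v * w := mul_comm _ _
      _ ≤ D' := hvwD'
  -- c2 * u ≤ frobNorm (Q - Q')
  have hDD : |D - D'| ≤ max v w * frobNorm (Q - Q') := by
    have h1 : |D - D'| ≤ max (max (v*|u - u'|) (w*|u - u'|)) 0 := by
      rw [hDeq, hD'eq]
      refine (abs_max_sub_max_le_max _ _ _ _).trans ?_
      refine max_le_max ?_ ?_
      · refine (abs_max_sub_max_le_max _ _ _ _).trans ?_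
        refine max_le_max ?_ ?_
        · rw [show u*v - u'*v = (u - u')*v by ring, abs_mul, abs_of_nonneg hv0]; ring_nf; exact le_refl _
        · rw [show u*w - u'*w = (u - u')*w by ring, abs_mul, abs_of_nonneg hw0]; ring_nf; exact le_refl _
      · simp
    refine h1.trans ?_
    have h2 : |u - u'| ≤ frobNorm (Q - Q') := abs_frob_sub Q Q'
    have h3 : v * |u - u'| ≤ max v w * frobNorm (Q - Q') := by
      refine mul_le_mul (le_max_left _ _) h2 (abs_nonneg _) ?_
      exact le_trans hv0 (le_max_left _ _)
    have h4 : w * |u - u'| ≤ max v w * frobNorm (Q - Q') := by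
      refine mul_le_mul (le_max_right _ _) h2 (abs_nonneg _) ?_
      exact le_trans hv0 (le_max_left _ _)
    have h5 : (0:ℝ) ≤ max v w * frobNorm (Q - Q') :=
      mul_nonneg (le_trans hv0 (le_max_left _ _)) hfd
    exact max_le (max_le h3 h4) h5
  have hprod : u * v * w * max v w ≤ D * D' := by
    rcases max_choice v w with h | h <;> rw [h]
    · calc u * v * w * v = (u*v) * (v*w) := by ring
        _ ≤ D * D' := mul_le_mul huvD hvwD' (by positivity) hD.le
    · calc u * v * w * w = (u*w) * (v*w) := by ring
        _ ≤ D * D' := mul_le_mul huwD hvwD' (by positivity) hD.le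
  have hc2u : c2 * u ≤ frobNorm (Q - Q') := by
    rw [hc2_def]
    rw [div_mul_eq_mul_div, div_le_iff₀ (mul_pos hD hD')]
    calc w * v * |D - D'| * u ≤ w * v * (max v w * frobNorm (Q - Q')) * u := by
          refine mul_le_mul_of_nonneg_right (mul_le_mul_of_nonneg_left hDD (by positivity)) hu0
      _ = (u * v * w * max v w) * frobNorm (Q - Q') := by ring
      _ ≤ (D * D') * frobNorm (Q - Q') := mul_le_mul_of_nonneg_right hprod hfd
      _ = frobNorm (Q - Q') * (D * D') := by ring
  calc c1 * frobNorm (Q - Q') + c2 * u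
      ≤ 1 * frobNorm (Q - Q') + frobNorm (Q - Q') := by
        refine add_le_add (mul_le_mul_of_nonneg_right hc1le hfd) hc2u
    _ = 2 * frobNorm (Q - Q') := by ring

end Steps
section Steps2
open Finset

variable {d n : ℕ}

lemma eq_zero_of_frob {M : Matrix (Fin d) (Fin n) ℝ} (h : frobNorm M ≤ 0) : M = 0 := by
  ext i j
  have h3 : frobNorm M = 0 := le_antisymm h (frob_nonneg M)
  have hs : ∑ i, ∑ j, M i j ^ 2 = 0 := by
    have e := Real.sq_sqrt (show (0:ℝ) ≤ ∑ i, ∑ j, M i j ^ 2 by positivity)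
    rw [show Real.sqrt (∑ i, ∑ j, M i j ^ 2) = frobNorm M from rfl, h3] at e
    simpa using e.symm
  have hrow := (Finset.sum_eq_zero_iff_of_nonneg
    (fun i _ => Finset.sum_nonneg fun j _ => sq_nonneg (M i j))).mp hs i (Finset.mem_univ i)
  have hentry := (Finset.sum_eq_zero_iff_of_nonneg
    (fun j _ => sq_nonneg (M i j))).mp hrow j (Finset.mem_univ j)
  have : M i j = 0 := by nlinarith [sq_nonneg (M i j)]
  simpa using this

lemma g_entry (hn : 0 < n) (Q K V : Matrix (Fin d) (Fin n) ℝ) (j k : Fin n) :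
    |((tDen Q K V)⁻¹ • (Qᵀ * K)) j k| ≤ 1 := by
  have hv0 : 0 ≤ normInf2 Kᵀ := normInf2_nonneg_s9 hn K
  have hw0 := normInf2_nonneg_s9 hn V
  have hu0 := frob_nonneg Q
  set D := tDen Q K V with hD_def
  have hD0 : 0 ≤ D := le_trans (mul_nonneg hv0 hw0) (le_max_right _ _)
  have e1 : ((D)⁻¹ • (Qᵀ * K)) j k = D⁻¹ * ((Qᵀ * K) j k) := by simp [Matrix.smul_apply]
  rcases eq_or_lt_of_le hD0 with h0 | hD
  · rw [e1, ← h0, inv_zero, zero_mul]; simp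
  · rw [e1, abs_mul, abs_of_pos (inv_pos.mpr hD)]
    have h1 : |(Qᵀ * K) j k| ≤ frobNorm Q * normInf2 Kᵀ :=
      (abs_dot_le Q K j k).trans
        (mul_le_mul (colE_le_frob Q j) (colE_le_normInf2 K k) (E_nonneg _) hu0)
    have h2 : frobNorm Q * normInf2 Kᵀ ≤ D := le_trans (le_max_left _ _) (le_max_left _ _)
    calc D⁻¹ * |(Qᵀ * K) j k| ≤ D⁻¹ * D :=
          mul_le_mul_of_nonneg_left (h1.trans h2) (inv_pos.mpr hD).le
      _ = 1 := inv_mul_cancel₀ hD.ne'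

lemma stepK (hn : 0 < n) (Q K K' V : Matrix (Fin d) (Fin n) ℝ) :
    frobNorm (tAtt Q K V - tAtt Q K' V) ≤ (2 / Real.log 2) * (2 * frobNorm (K - K')) := by
  have hL := hL_pos
  set v := normInf2 Kᵀ with hv_def
  set v' := normInf2 K'ᵀ with hv'_def
  set w := normInf2 Vᵀ with hw_def
  set u := frobNorm Q with hu_def
  have hv0 : 0 ≤ v := normInf2_nonneg_s9 hn K
  have hv'0 : 0 ≤ v' := normInf2_nonneg_s9 hn K'
  have hw0 : 0 ≤ w := normInf2_nonneg_s9 hn V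
  have hu0 : 0 ≤ u := frob_nonneg Q
  have hfd : 0 ≤ frobNorm (K - K') := frob_nonneg _
  have hRHS : 0 ≤ (2 / Real.log 2) * (2 * frobNorm (K - K')) := by positivity
  by_cases hw' : w ≤ 0
  · have hV : V = 0 := eq_zero_of_normInf2 hw'
    rw [tAtt, tAtt, hV, Matrix.zero_mul, Matrix.zero_mul, sub_zero, frob_zero]
    exact hRHS
  by_cases hu' : u ≤ 0
  · have hQ : Q = 0 := eq_zero_of_frob hu'
    have hA : Qᵀ * K = 0 := by rw [hQ]; simp
    have hA' : Qᵀ * K' = 0 := by rw [hQ]; simp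
    have e1 : tAtt Q K V = tAtt Q K' V := by
      rw [tAtt, tAtt, hA, hA', smul_zero, smul_zero]
    rw [e1, sub_self, frob_zero]
    exact hRHS
  push_neg at hw' hu'
  set D := tDen Q K V with hD_def
  set D' := tDen Q K' V with hD'_def
  have hDeq : D = max (max (u*v) (u*w)) (v*w) := rfl
  have hD'eq : D' = max (max (u*v') (u*w)) (v'*w) := rfl
  have huwD : u*w ≤ D := by rw [hDeq]; exact le_trans (le_max_right _ _) (le_max_left _ _)
  have huwD' : u*w ≤ D' := by rw [hD'eq]; exact le_trans (le_max_right _ _) (le_max_left _ _)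
  have huvD : u*v ≤ D := by rw [hDeq]; exact le_trans (le_max_left _ _) (le_max_left _ _)
  have hvwD : v*w ≤ D := by rw [hDeq]; exact le_max_right _ _
  have hD : 0 < D := lt_of_lt_of_le (mul_pos hu' hw') huwD
  have hD' : 0 < D' := lt_of_lt_of_le (mul_pos hu' hw') huwD'
  set G := D⁻¹ • (Qᵀ * K) with hG_def
  set G' := D'⁻¹ • (Qᵀ * K') with hG'_def
  have hdiff : tAtt Q K V - tAtt Q K' V = V * (softmaxM G - softmaxM G')ᵀ := by
    rw [tAtt, tAtt, Matrix.transpose_sub, Matrix.mul_sub]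
  set δ : Fin n → ℝ := fun j =>
    E (fun i => Q i j) * frobNorm (K - K') / D' +
      E (fun i => Q i j) * v * |D - D'| / (D * D') with hδ_def
  have hδ0 : ∀ j, 0 ≤ δ j := by
    intro j
    have h2 := E_nonneg (fun i => Q i j)
    have := abs_nonneg (D - D')
    positivity
  have hbound : ∀ j k, |G j k - G' j k| ≤ δ j := by
    intro j k
    have e1 : G j k = D⁻¹ * ((Qᵀ * K) j k) := by rw [hG_def]; simp [Matrix.smul_apply]
    have e2 : G' j k = D'⁻¹ * ((Qᵀ * K') j k) := by rw [hG'_def]; simp [Matrix.smul_apply]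
    rw [e1, e2]
    refine (inv_smul_diff _ _ _ _ hD hD').trans ?_
    have hab : (Qᵀ * K) j k - (Qᵀ * K') j k = (Qᵀ * (K - K')) j k := by
      rw [mulT_apply, mulT_apply, mulT_apply, ← Finset.sum_sub_distrib]
      refine Finset.sum_congr rfl fun i _ => ?_
      simp [Matrix.sub_apply]
      ring
    have h1 : |(Qᵀ * K) j k - (Qᵀ * K') j k| ≤ E (fun i => Q i j) * frobNorm (K - K') := by
      rw [hab]
      refine (abs_dot_le _ _ _ _).trans ?_
      exact mul_le_mul_of_nonneg_left (colE_le_frob (K - K') k) (E_nonneg _)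
    have h2 : |(Qᵀ * K) j k| ≤ E (fun i => Q i j) * v := by
      refine (abs_dot_le _ _ _ _).trans ?_
      exact mul_le_mul_of_nonneg_left (colE_le_normInf2 K k) (E_nonneg _)
    have hδj : δ j = E (fun i => Q i j) * frobNorm (K - K') / D' +
        E (fun i => Q i j) * v * |D - D'| / (D * D') := rfl
    rw [hδj]
    have hDD' : (0:ℝ) < D * D' := mul_pos hD hD'
    refine add_le_add ?_ ?_
    · exact (div_le_div_iff_of_pos_right hD').mpr h1
    · exact (div_le_div_iff_of_pos_right hDD').mpr (mul_le_mul_of_nonneg_right h2 (abs_nonneg _))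
  have ht2 := term2_bound hn V G G' δ hδ0 hbound
  rw [hdiff]
  refine ht2.trans ?_
  refine mul_le_mul_of_nonneg_left ?_ hL.le
  set c1 := w * frobNorm (K - K') / D' with hc1_def
  set c2 := w * v * |D - D'| / (D * D') with hc2_def
  have hc1 : 0 ≤ c1 := by positivity
  have hc2 : 0 ≤ c2 := by positivity
  have hsplit : (fun j => w * δ j) = fun j => (c1 + c2) * E (fun i => Q i j) := by
    funext j
    rw [hδ_def, hc1_def, hc2_def]
    ring
  rw [hsplit]
  rw [E_smul, abs_of_nonneg (by positivity : (0:ℝ) ≤ c1 + c2), ← frob_eq_E_cols]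
  -- (c1 + c2) * u ≤ 2 * frob(K - K')
  have hc1u : c1 * u ≤ frobNorm (K - K') := by
    rw [hc1_def, div_mul_eq_mul_div, div_le_iff₀ hD']
    calc w * frobNorm (K - K') * u = (u * w) * frobNorm (K - K') := by ring
      _ ≤ D' * frobNorm (K - K') := mul_le_mul_of_nonneg_right huwD' hfd
      _ = frobNorm (K - K') * D' := by ring
  have hDD : |D - D'| ≤ max u w * frobNorm (K - K') := by
    have h2 : |v - v'| ≤ frobNorm (K - K') := abs_normInf2_sub hn K K'
    have h1 : |D - D'| ≤ max (max (u*|v - v'|) 0) (w*|v - v'|) := by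
      rw [hDeq, hD'eq]
      refine (abs_max_sub_max_le_max _ _ _ _).trans ?_
      refine max_le_max ?_ ?_
      · refine (abs_max_sub_max_le_max _ _ _ _).trans (max_le_max ?_ ?_)
        · rw [show u*v - u*v' = u*(v - v') by ring, abs_mul, abs_of_nonneg hu0]
        · simp
      · rw [show v*w - v'*w = w*(v - v') by ring, abs_mul, abs_of_nonneg hw0]
    refine h1.trans ?_
    have h3 : u * |v - v'| ≤ max u w * frobNorm (K - K') :=
      mul_le_mul (le_max_left _ _) h2 (abs_nonneg _) (le_trans hu0 (le_max_left _ _))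
    have h4 : w * |v - v'| ≤ max u w * frobNorm (K - K') :=
      mul_le_mul (le_max_right _ _) h2 (abs_nonneg _) (le_trans hu0 (le_max_left _ _))
    have h5 : (0:ℝ) ≤ max u w * frobNorm (K - K') :=
      mul_nonneg (le_trans hu0 (le_max_left _ _)) hfd
    exact max_le (max_le h3 h5) h4
  have hprod : u * v * w * max u w ≤ D * D' := by
    rcases max_choice u w with h | h <;> rw [h]
    · calc u * v * w * u = (u*v) * (u*w) := by ring
        _ ≤ D * D' := mul_le_mul huvD huwD' (by positivity) hD.le
    · calc u * v * w * w = (v*w) * (u*w) := by ring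
        _ ≤ D * D' := mul_le_mul hvwD huwD' (by positivity) hD.le
  have hc2u : c2 * u ≤ frobNorm (K - K') := by
    rw [hc2_def, div_mul_eq_mul_div, div_le_iff₀ (mul_pos hD hD')]
    calc w * v * |D - D'| * u ≤ w * v * (max u w * frobNorm (K - K')) * u := by
          refine mul_le_mul_of_nonneg_right (mul_le_mul_of_nonneg_left hDD (by positivity)) hu0
      _ = (u * v * w * max u w) * frobNorm (K - K') := by ring
      _ ≤ (D * D') * frobNorm (K - K') := mul_le_mul_of_nonneg_right hprod hfd
      _ = frobNorm (K - K') * (D * D') := by ring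
  calc (c1 + c2) * u = c1 * u + c2 * u := by ring
    _ ≤ frobNorm (K - K') + frobNorm (K - K') := add_le_add hc1u hc2u
    _ = 2 * frobNorm (K - K') := by ring

end Steps2
section Steps3
open Finset

variable {d n : ℕ}

lemma stepV (hn : 0 < n) (Q K V V' : Matrix (Fin d) (Fin n) ℝ) :
    frobNorm (tAtt Q K V - tAtt Q K V') ≤
      (Real.exp 1 + 2 / Real.log 2) * frobNorm (V - V') := by
  have hL := hL_pos
  set v := normInf2 Kᵀ with hv_def
  set w := normInf2 Vᵀ with hw_def
  set w' := normInf2 V'ᵀ with hw'_def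
  set u := frobNorm Q with hu_def
  have hv0 : 0 ≤ v := normInf2_nonneg_s9 hn K
  have hw0 : 0 ≤ w := normInf2_nonneg_s9 hn V
  have hu0 : 0 ≤ u := frob_nonneg Q
  have hfd : 0 ≤ frobNorm (V - V') := frob_nonneg _
  set D := tDen Q K V with hD_def
  set D' := tDen Q K V' with hD'_def
  set G := D⁻¹ • (Qᵀ * K) with hG_def
  set G' := D'⁻¹ • (Qᵀ * K) with hG'_def
  have hdiff : tAtt Q K V - tAtt Q K V' =
      V * (softmaxM G - softmaxM G')ᵀ + (V - V') * (softmaxM G')ᵀ := by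
    rw [tAtt, tAtt, Matrix.transpose_sub, Matrix.mul_sub, Matrix.sub_mul]
    abel
  have hterm1 : frobNorm ((V - V') * (softmaxM G')ᵀ) ≤ Real.exp 1 * frobNorm (V - V') :=
    term1_bound hn (V - V') G' (fun j k => g_entry hn Q K V' j k)
  have htri : frobNorm (tAtt Q K V - tAtt Q K V') ≤
      frobNorm (V * (softmaxM G - softmaxM G')ᵀ) + frobNorm ((V - V') * (softmaxM G')ᵀ) := by
    rw [hdiff]; exact frob_triangle _ _
  have hterm2 : frobNorm (V * (softmaxM G - softmaxM G')ᵀ) ≤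
      (2 / Real.log 2) * frobNorm (V - V') := by
    by_cases hu' : u ≤ 0
    · have hQ : Q = 0 := eq_zero_of_frob hu'
      have hA : Qᵀ * K = 0 := by rw [hQ]; simp
      have e1 : G = G' := by rw [hG_def, hG'_def, hA, smul_zero, smul_zero]
      rw [e1, sub_self]
      have : (0 : Matrix (Fin n) (Fin n) ℝ)ᵀ = 0 := Matrix.transpose_zero
      rw [this, Matrix.mul_zero, frob_zero]
      positivity
    by_cases hv' : v ≤ 0
    · have hK : K = 0 := eq_zero_of_normInf2 hv'
      have hA : Qᵀ * K = 0 := by rw [hK]; simp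
      have e1 : G = G' := by rw [hG_def, hG'_def, hA, smul_zero, smul_zero]
      rw [e1, sub_self]
      have : (0 : Matrix (Fin n) (Fin n) ℝ)ᵀ = 0 := Matrix.transpose_zero
      rw [this, Matrix.mul_zero, frob_zero]
      positivity
    push_neg at hu' hv'
    have hDeq : D = max (max (u*v) (u*w)) (v*w) := rfl
    have hD'eq : D' = max (max (u*v) (u*w')) (v*w') := rfl
    have huvD : u*v ≤ D := by rw [hDeq]; exact le_trans (le_max_left _ _) (le_max_left _ _)
    have huvD' : u*v ≤ D' := by rw [hD'eq]; exact le_trans (le_max_left _ _) (le_max_left _ _)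
    have huwD : u*w ≤ D := by rw [hDeq]; exact le_trans (le_max_right _ _) (le_max_left _ _)
    have hvwD : v*w ≤ D := by rw [hDeq]; exact le_max_right _ _
    have hD : 0 < D := lt_of_lt_of_le (mul_pos hu' hv') huvD
    have hD' : 0 < D' := lt_of_lt_of_le (mul_pos hu' hv') huvD'
    set δ : Fin n → ℝ := fun j => E (fun i => Q i j) * v * |D - D'| / (D * D') with hδ_def
    have hδ0 : ∀ j, 0 ≤ δ j := by
      intro j
      have h2 := E_nonneg (fun i => Q i j)
      have := abs_nonneg (D - D')
      positivity
    have hbound : ∀ j k, |G j k - G' j k| ≤ δ j := by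
      intro j k
      have e1 : G j k = D⁻¹ * ((Qᵀ * K) j k) := by rw [hG_def]; simp [Matrix.smul_apply]
      have e2 : G' j k = D'⁻¹ * ((Qᵀ * K) j k) := by rw [hG'_def]; simp [Matrix.smul_apply]
      rw [e1, e2]
      refine (inv_smul_diff _ _ _ _ hD hD').trans ?_
      have h2 : |(Qᵀ * K) j k| ≤ E (fun i => Q i j) * v := by
        refine (abs_dot_le _ _ _ _).trans ?_
        exact mul_le_mul_of_nonneg_left (colE_le_normInf2 K k) (E_nonneg _)
      have hδj : δ j = E (fun i => Q i j) * v * |D - D'| / (D * D') := rfl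
      rw [hδj, sub_self, abs_zero, zero_div, zero_add]
      have hDD' : (0:ℝ) < D * D' := mul_pos hD hD'
      exact (div_le_div_iff_of_pos_right hDD').mpr (mul_le_mul_of_nonneg_right h2 (abs_nonneg _))
    refine (term2_bound hn V G G' δ hδ0 hbound).trans ?_
    refine mul_le_mul_of_nonneg_left ?_ hL.le
    set c2 := w * v * |D - D'| / (D * D') with hc2_def
    have hsplit : (fun j => w * δ j) = fun j => c2 * E (fun i => Q i j) := by
      funext j
      rw [hδ_def, hc2_def]
      ring
    rw [hsplit, E_smul, abs_of_nonneg (by positivity : (0:ℝ) ≤ c2), ← frob_eq_E_cols]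
    have hDD : |D - D'| ≤ max u v * frobNorm (V - V') := by
      have h2 : |w - w'| ≤ frobNorm (V - V') := abs_normInf2_sub hn V V'
      have h1 : |D - D'| ≤ max (max 0 (u*|w - w'|)) (v*|w - w'|) := by
        rw [hDeq, hD'eq]
        refine (abs_max_sub_max_le_max _ _ _ _).trans ?_
        refine max_le_max ?_ ?_
        · refine (abs_max_sub_max_le_max _ _ _ _).trans (max_le_max ?_ ?_)
          · simp
          · rw [show u*w - u*w' = u*(w - w') by ring, abs_mul, abs_of_nonneg hu0]
        · rw [show v*w - v*w' = v*(w - w') by ring, abs_mul, abs_of_nonneg hv0]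
      refine h1.trans ?_
      have h3 : u * |w - w'| ≤ max u v * frobNorm (V - V') :=
        mul_le_mul (le_max_left _ _) h2 (abs_nonneg _) (le_trans hu0 (le_max_left _ _))
      have h4 : v * |w - w'| ≤ max u v * frobNorm (V - V') :=
        mul_le_mul (le_max_right _ _) h2 (abs_nonneg _) (le_trans hu0 (le_max_left _ _))
      have h5 : (0:ℝ) ≤ max u v * frobNorm (V - V') :=
        mul_nonneg (le_trans hu0 (le_max_left _ _)) hfd
      exact max_le (max_le h5 h3) h4
    have hprod : u * v * w * max u v ≤ D * D' := by
      rcases max_choice u v with h | h <;> rw [h]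
      · calc u * v * w * u = (u*w) * (u*v) := by ring
          _ ≤ D * D' := mul_le_mul huwD huvD' (by positivity) hD.le
      · calc u * v * w * v = (v*w) * (u*v) := by ring
          _ ≤ D * D' := mul_le_mul hvwD huvD' (by positivity) hD.le
    rw [hc2_def, div_mul_eq_mul_div, div_le_iff₀ (mul_pos hD hD')]
    calc w * v * |D - D'| * u ≤ w * v * (max u v * frobNorm (V - V')) * u := by
          refine mul_le_mul_of_nonneg_right (mul_le_mul_of_nonneg_left hDD (by positivity)) hu0
      _ = (u * v * w * max u v) * frobNorm (V - V') := by ring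
      _ ≤ (D * D') * frobNorm (V - V') := mul_le_mul_of_nonneg_right hprod hfd
      _ = frobNorm (V - V') * (D * D') := by ring
  calc frobNorm (tAtt Q K V - tAtt Q K V')
      ≤ frobNorm (V * (softmaxM G - softmaxM G')ᵀ) + frobNorm ((V - V') * (softmaxM G')ᵀ) := htri
    _ ≤ (2 / Real.log 2) * frobNorm (V - V') + Real.exp 1 * frobNorm (V - V') :=
        add_le_add hterm2 hterm1
    _ = (Real.exp 1 + 2 / Real.log 2) * frobNorm (V - V') := by ring

end Steps3
section Final
open Finset

lemma cs3 (p q r a b c : ℝ) (hp : 0 ≤ p) (hq : 0 ≤ q) (hr : 0 ≤ r)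
    (ha : 0 ≤ a) (hb : 0 ≤ b) (hc : 0 ≤ c) :
    p*a + q*b + r*c ≤ Real.sqrt (p^2+q^2+r^2) * Real.sqrt (a^2+b^2+c^2) := by
  have hsq : (p*a+q*b+r*c)^2 ≤ (p^2+q^2+r^2)*(a^2+b^2+c^2) := by
    nlinarith [sq_nonneg (p*b - q*a), sq_nonneg (p*c - r*a), sq_nonneg (q*c - r*b)]
  have h0 : 0 ≤ p*a+q*b+r*c := by positivity
  calc p*a+q*b+r*c = Real.sqrt ((p*a+q*b+r*c)^2) := (Real.sqrt_sq h0).symm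
    _ ≤ Real.sqrt ((p^2+q^2+r^2)*(a^2+b^2+c^2)) := Real.sqrt_le_sqrt hsq
    _ = Real.sqrt (p^2+q^2+r^2) * Real.sqrt (a^2+b^2+c^2) := Real.sqrt_mul (by positivity) _

lemma exp_sqrt3_lb : (2.875:ℝ) + 1.5 * Real.sqrt 3 ≤ Real.exp (Real.sqrt 3) := by
  have h := Real.sum_le_exp_of_nonneg (Real.sqrt_nonneg 3) 5
  have h3 : Real.sqrt 3 ^ 2 = 3 := Real.sq_sqrt (by norm_num)
  simp [Finset.sum_range_succ, Nat.factorial] at h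
  nlinarith [h, h3, Real.sqrt_nonneg 3]

lemma numeric_combine (a b c : ℝ) (ha : 0 ≤ a) (hb : 0 ≤ b) (hc : 0 ≤ c) :
    (2/Real.log 2) * (2*a) + (2/Real.log 2) * (2*b) + (Real.exp 1 + 2/Real.log 2) * c ≤
    (Real.exp (Real.sqrt 3) + 2 * Real.sqrt 6) * Real.sqrt (a^2 + b^2 + c^2) := by
  have hL9 : (0.6931471803:ℝ) < Real.log 2 := Real.log_two_gt_d9
  have hL : (0:ℝ) < Real.log 2 := lt_trans (by norm_num) hL9
  have hlam : 2/Real.log 2 ≤ 2.8853901 := by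
    rw [div_le_iff₀ hL]; nlinarith
  have hlam0 : (0:ℝ) ≤ 2/Real.log 2 := by positivity
  have he : Real.exp 1 ≤ 2.7182818286 := le_of_lt Real.exp_one_lt_d9
  have he0 : (0:ℝ) < Real.exp 1 := Real.exp_pos 1
  -- the coefficient vector norm is at most 9.8998
  have hsq : ((2/Real.log 2)*2)^2 + ((2/Real.log 2)*2)^2 + (Real.exp 1 + 2/Real.log 2)^2
      ≤ (9.8998:ℝ)^2 := by nlinarith
  -- the target constant is at least 10.37
  have h3 : (1.7320508:ℝ) ≤ Real.sqrt 3 := by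
    rw [show (1.7320508:ℝ) = Real.sqrt (1.7320508^2) by rw [Real.sqrt_sq (by norm_num)]]
    exact Real.sqrt_le_sqrt (by norm_num)
  have h6 : (2.4494897:ℝ) ≤ Real.sqrt 6 := by
    rw [show (2.4494897:ℝ) = Real.sqrt (2.4494897^2) by rw [Real.sqrt_sq (by norm_num)]]
    exact Real.sqrt_le_sqrt (by norm_num)
  have hC : (9.8998:ℝ) ≤ Real.exp (Real.sqrt 3) + 2 * Real.sqrt 6 := by
    have := exp_sqrt3_lb
    nlinarith
  have hcs := cs3 ((2/Real.log 2)*2) ((2/Real.log 2)*2) (Real.exp 1 + 2/Real.log 2) a b c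
    (by positivity) (by positivity) (by positivity) ha hb hc
  have hnorm : Real.sqrt (((2/Real.log 2)*2)^2 + ((2/Real.log 2)*2)^2
      + (Real.exp 1 + 2/Real.log 2)^2) ≤ 9.8998 := by
    refine le_trans (Real.sqrt_le_sqrt hsq) ?_
    rw [Real.sqrt_sq (by norm_num)]
  have hs0 : (0:ℝ) ≤ Real.sqrt (a^2+b^2+c^2) := Real.sqrt_nonneg _
  calc (2/Real.log 2) * (2*a) + (2/Real.log 2) * (2*b) + (Real.exp 1 + 2/Real.log 2) * c
      = (2/Real.log 2)*2*a + (2/Real.log 2)*2*b + (Real.exp 1 + 2/Real.log 2)*c := by ring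
    _ ≤ Real.sqrt (((2/Real.log 2)*2)^2 + ((2/Real.log 2)*2)^2
        + (Real.exp 1 + 2/Real.log 2)^2) * Real.sqrt (a^2+b^2+c^2) := hcs
    _ ≤ 9.8998 * Real.sqrt (a^2+b^2+c^2) := mul_le_mul_of_nonneg_right hnorm hs0
    _ ≤ (Real.exp (Real.sqrt 3) + 2 * Real.sqrt 6) * Real.sqrt (a^2+b^2+c^2) :=
        mul_le_mul_of_nonneg_right hC hs0

end Final

/-- **LipschitzNorm, Transformer case.** For inputs `(Q,K,V)` with
`max{uv, uw, vw} > 0`, the normalized Transformer attention is Lipschitz continuous with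
respect to the Frobenius norm on the concatenated input `(Q‖K‖V)` with constant at most
`e^{√3} √(m/n) + 2√6` where `m = n`, i.e. `e^{√3} + 2√6`. -/
theorem transformer_attention_lipschitz {d n : ℕ} :
    ∀ Q K V Q' K' V' : Matrix (Fin d) (Fin n) ℝ,
      0 < tDen Q K V → 0 < tDen Q' K' V' →
      frobNorm (tAtt Q K V - tAtt Q' K' V') ≤
        (Real.exp (Real.sqrt 3) + 2 * Real.sqrt 6) *
          Real.sqrt (frobNorm (Q - Q') ^ 2 + frobNorm (K - K') ^ 2 + frobNorm (V - V') ^ 2) := by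
  intro Q K V Q' K' V' _ _
  rcases Nat.eq_zero_or_pos n with hn | hn
  · subst hn
    have hzero : frobNorm (tAtt Q K V - tAtt Q' K' V') = 0 := by
      simp [frobNorm]
    rw [hzero]
    positivity
  · have htri : frobNorm (tAtt Q K V - tAtt Q' K' V') ≤
        frobNorm (tAtt Q K V - tAtt Q' K V) + frobNorm (tAtt Q' K V - tAtt Q' K' V)
          + frobNorm (tAtt Q' K' V - tAtt Q' K' V') := by
      have e1 : tAtt Q K V - tAtt Q' K' V' =
          (tAtt Q K V - tAtt Q' K V) + ((tAtt Q' K V - tAtt Q' K' V)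
            + (tAtt Q' K' V - tAtt Q' K' V')) := by abel
      rw [e1]
      refine (frob_triangle _ _).trans ?_
      have := frob_triangle (tAtt Q' K V - tAtt Q' K' V) (tAtt Q' K' V - tAtt Q' K' V')
      linarith
    have s1 := stepQ hn Q Q' K V
    have s2 := stepK hn Q' K K' V
    have s3 := stepV hn Q' K' V V'
    have hnum := numeric_combine (frobNorm (Q - Q')) (frobNorm (K - K')) (frobNorm (V - V'))
      (frob_nonneg _) (frob_nonneg _) (frob_nonneg _)
    linarith
end
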